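/- arXiv:1910.03379 — 4 statements merged into one kernel-verified Lean document; each statement's English description precedes it below -/
import Mathlib

section
/- The Simson–Wallace line of a point S on the circumcircle of a triangle bisects the segment joining S to the orthocentre H of the triangle; in particular the midpoint of SH lies on the nine-point circle. -/
open RealInnerProductSpace

private lemma dep2 (u v : EuclideanSpace ℝ (Fin 2)) (h : u 0 * v 1 - u 1 * v 0 = 0)
    (hu : u 0 ≠ 0 ∨ u 1 ≠ 0) : ∃ t : ℝ, v = t • u := by
  rcases hu with hu | hu
  · refine ⟨v 0 / u 0, ?_⟩
    ext i; fin_cases i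
    · simp; field_simp
    · simp; field_simp; linear_combination h
  · refine ⟨v 1 / u 1, ?_⟩
    ext i; fin_cases i
    · simp; field_simp; linear_combination -h
    · simp; field_simp

private lemma coll4 (P Q R T : EuclideanSpace ℝ (Fin 2))
    (h1 : (Q 0 - P 0) * (R 1 - P 1) - (Q 1 - P 1) * (R 0 - P 0) = 0)
    (h2 : (Q 0 - P 0) * (T 1 - P 1) - (Q 1 - P 1) * (T 0 - P 0) = 0)
    (h3 : (R 0 - P 0) * (T 1 - P 1) - (R 1 - P 1) * (T 0 - P 0) = 0) :
    Collinear ℝ ({P, Q, R, T} : Set (EuclideanSpace ℝ (Fin 2))) := by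
  have key : ∀ X : EuclideanSpace ℝ (Fin 2), ∀ v : EuclideanSpace ℝ (Fin 2),
      (∃ t : ℝ, X - P = t • v) → ∃ t : ℝ, X = t • v +ᵥ P := by
    rintro X v ⟨t, ht⟩
    exact ⟨t, by rw [← ht]; simp⟩
  rw [collinear_iff_of_mem (Set.mem_insert P _)]
  by_cases hq : (Q - P) 0 ≠ 0 ∨ (Q - P) 1 ≠ 0
  · refine ⟨Q - P, ?_⟩
    intro X hX
    simp only [Set.mem_insert_iff, Set.mem_singleton_iff] at hX
    rcases hX with rfl | rfl | rfl | rfl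
    · exact key _ _ ⟨0, by simp⟩
    · exact key _ _ ⟨1, by simp⟩
    · refine key _ _ (dep2 _ _ ?_ hq)
      simp only [PiLp.sub_apply]; linear_combination h1
    · refine key _ _ (dep2 _ _ ?_ hq)
      simp only [PiLp.sub_apply]; linear_combination h2
  · push_neg at hq
    have hQP : Q = P := by
      ext i; fin_cases i
      · have := hq.1; simp at this ⊢; linarith
      · have := hq.2; simp at this ⊢; linarith
    by_cases hr : (R - P) 0 ≠ 0 ∨ (R - P) 1 ≠ 0
    · refine ⟨R - P, ?_⟩
      intro X hX
      simp only [Set.mem_insert_iff, Set.mem_singleton_iff] at hX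
      rcases hX with rfl | rfl | rfl | rfl
      · exact key _ _ ⟨0, by simp⟩
      · exact key _ _ ⟨0, by simp [hQP]⟩
      · exact key _ _ ⟨1, by simp⟩
      · refine key _ _ (dep2 _ _ ?_ hr)
        simp only [PiLp.sub_apply]; linear_combination h3
    · push_neg at hr
      have hRP : R = P := by
        ext i; fin_cases i
        · have := hr.1; simp at this ⊢; linarith
        · have := hr.2; simp at this ⊢; linarith
      refine ⟨T - P, ?_⟩
      intro X hX
      simp only [Set.mem_insert_iff, Set.mem_singleton_iff] at hX
      rcases hX with rfl | rfl | rfl | rfl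
      · exact key _ _ ⟨0, by simp⟩
      · exact key _ _ ⟨0, by simp [hQP]⟩
      · exact key _ _ ⟨0, by simp [hRP]⟩
      · exact key _ _ ⟨1, by simp⟩

private lemma collcross (P Q R : EuclideanSpace ℝ (Fin 2))
    (h : Collinear ℝ ({P, Q, R} : Set (EuclideanSpace ℝ (Fin 2)))) :
    (Q 0 - P 0) * (R 1 - P 1) - (Q 1 - P 1) * (R 0 - P 0) = 0 := by
  rw [collinear_iff_of_mem (Set.mem_insert P _)] at h
  obtain ⟨v, hv⟩ := h
  obtain ⟨rq, hq⟩ := hv Q (by simp)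
  obtain ⟨rr, hr⟩ := hv R (by simp)
  have hq0 : Q 0 = rq * v 0 + P 0 := by rw [hq]; simp
  have hq1 : Q 1 = rq * v 1 + P 1 := by rw [hq]; simp
  have hr0 : R 0 = rr * v 0 + P 0 := by rw [hr]; simp
  have hr1 : R 1 = rr * v 1 + P 1 := by rw [hr]; simp
  rw [hq0, hq1, hr0, hr1]; ring

private lemma ortho (a0 a1 b0 b1 c0 c1 o0 o1 h0 h1 : ℝ)
    (hB : (b0-o0)^2+(b1-o1)^2 = (a0-o0)^2+(a1-o1)^2)
    (hC : (c0-o0)^2+(c1-o1)^2 = (a0-o0)^2+(a1-o1)^2)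
    (hH1 : (h0-a0)*(b0-c0)+(h1-a1)*(b1-c1) = 0)
    (hH2 : (h0-b0)*(c0-a0)+(h1-b1)*(c1-a1) = 0)
    (hd : (b0-a0)*(c1-a1)-(b1-a1)*(c0-a0) ≠ 0) :
    h0 = a0+b0+c0-2*o0 ∧ h1 = a1+b1+c1-2*o1 := by
  have k0 : (h0-(a0+b0+c0-2*o0)) * ((b0-a0)*(c1-a1)-(b1-a1)*(c0-a0)) = 0 := by
    linear_combination (c1-a1)*hH1 - (b1-c1)*hH2 - (c1-a1)*hB + (c1-a1)*hC + (b1-c1)*hC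
  have k1 : (h1-(a1+b1+c1-2*o1)) * ((b0-a0)*(c1-a1)-(b1-a1)*(c0-a0)) = 0 := by
    linear_combination (b0-c0)*hH2 - (b0-c0)*hC - (c0-a0)*hH1 + (c0-a0)*hB - (c0-a0)*hC
  constructor
  · rcases mul_eq_zero.mp k0 with h | h
    · linarith
    · exact absurd h hd
  · rcases mul_eq_zero.mp k1 with h | h
    · linarith
    · exact absurd h hd


set_option maxHeartbeats 1000000 in
private lemma simson_core (a A b B c C s S f1 F1 f2 F2 f3 F3 m M : ℂ)
    (hB : b*B = a*A) (hC : c*C = a*A) (hS : s*S = a*A)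
    (hu1 : c-b ≠ 0) (hU1 : C-B ≠ 0) (hu2 : a-c ≠ 0) (hU2 : A-C ≠ 0)
    (hu3 : b-a ≠ 0) (hU3 : B-A ≠ 0)
    (E1 : 2*f1*(C-B) = ((b+s)*(C-B) + (S-B)*(c-b))) (E1' : 2*F1*(c-b) = ((s-b)*(C-B) + (S+B)*(c-b)))
    (E2 : 2*f2*(A-C) = ((c+s)*(A-C) + (S-C)*(a-c))) (E2' : 2*F2*(a-c) = ((s-c)*(A-C) + (S+C)*(a-c)))
    (E3 : 2*f3*(B-A) = ((a+s)*(B-A) + (S-A)*(b-a))) (E3' : 2*F3*(b-a) = ((s-a)*(B-A) + (S+A)*(b-a)))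
    (hm : 2*m = s+a+b+c) (hM : 2*M = S+A+B+C) :
    ((f2-f1)*(F3-F1) - (F2-F1)*(f3-f1) = 0) ∧
    ((f2-f1)*(M-F1) - (F2-F1)*(m-f1) = 0) ∧
    ((f3-f1)*(M-F1) - (F3-F1)*(m-f1) = 0) := by
  refine ⟨?_, ?_, ?_⟩
  · have h : (16*((C-B)*(c-b))*((A-C)*(a-c))*((B-A)*(b-a))) *
        ((f2-f1)*(F3-F1) - (F2-F1)*(f3-f1)) = 0 := by
      linear_combination ((a-c)*(B-A))*((4*(c-b)*(b-a)*(F3-F1))*(2*(C-B)*E2 - 2*(A-C)*E1) + (2*(((c+s)*(A-C) + (S-C)*(a-c))*(C-B) - ((b+s)*(C-B) + (S-B)*(c-b))*(A-C)))*(2*(c-b)*E3' - 2*(b-a)*E1')) - ((A-C)*(b-a))*((4*(C-B)*(B-A)*(f3-f1))*(2*(c-b)*E2' - 2*(a-c)*E1') + (2*(((s-c)*(A-C) + (S+C)*(a-c))*(c-b) - ((s-b)*(C-B) + (S+B)*(c-b))*(a-c)))*(2*(C-B)*E3 - 2*(B-A)*E1)) + (12*B*c^2*C*s*S - 8*B*c^2*C^2*s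 - 4*B*c^3*C*S - 4*B^2*c^2*C*s + 4*B^2*c^3*S - 12*b*c*C^2*s*S + 4*b*c*C^3*s + 8*b*c^2*C^2*S + 8*b*B*c*C^2*s - 8*b*B*c^2*C*S - 4*b^2*C^3*s + 4*b^2*c*C^2*S - 24*A*c^2*C*s*S + 16*A*c^2*C^2*s + 8*A*c^3*C*S - 12*A*B*c^2*s*S + 16*A*B*c^2*C*s - 8*A*B*c^3*S + 4*A*B*c^3*C + 4*A*B^2*c^2*s - 4*A*B^2*c^3 + 24*A*b*c*C*s*S - 16*A*b*c*C^2*s - 8*A*b*c^2*C^2 - 16*A*b*B*c*C*s + 8*A*b*B*c^2*S + 8*A*b*B*c^2*C + 12*A*b^2*C^2*s - 8*A*b^2*c*C*S - 4*A*b^2*c*C^2 + 24*A^2*c^2*s*S - 20*A^2*c^2*C*s + 4*A^2*c^3*S - 8*A^2*c^3*C - 8*A^2*B*c^2*s + 8*A^2*B*c^3 - 12*A^2*b*c*s*S + 20*A^2*b*c*C*s - 8*A^2*b*c^2*S + 8*A^2*b*B*c*s - 8*A^2*b*B*c^2 - 12*A^2*b^2*C*s + 4*A^2*b^2*c*S +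 8*A^2*b^2*c*C + 4*A^3*c^2*s - 4*A^3*c^3 - 8*A^3*b*c*s + 8*A^3*b*c^2 + 4*A^3*b^2*s - 4*A^3*b^2*c + 24*a*c*C^2*s*S - 8*a*c*C^3*s - 16*a*c^2*C^2*S - 24*a*B*c*C*s*S + 16*a*B*c^2*C*S + 8*a*B*c^2*C^2 + 8*a*B^2*c*C*s - 12*a*B^2*c^2*S + 4*a*B^2*c^2*C + 12*a*b*C^2*s*S + 8*a*b*C^3*s - 16*a*b*c*C^2*S - 4*a*b*c*C^3 - 8*a*b*B*C^2*s + 16*a*b*B*c*C*S - 8*a*b*B*c*C^2 - 4*a*b^2*C^2*S + 4*a*b^2*C^3 + 8*a*A*c*C^2*s - 8*a*A*c^2*C*S + 24*a*A*B*c*s*S + 20*a*A*B*c^2*S - 44*a*A*B*c^2*C - 8*a*A*B^2*c*s + 8*a*A*B^2*c^2 - 24*a*A*b*C*s*S - 20*a*A*b*C^2*s + 44*a*A*b*c*C^2 + 16*a*A*b*B*C*s - 16*a*A*b*B*c*S + 8*a*A*b^2*C*S - 8*a*A*b^2*C^2 - 24*a*A^2*c*s*S - 16*a*A^2*c*C*s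 - 12*a*A^2*c^2*S + 52*a*A^2*c^2*C + 12*a*A^2*b*s*S + 16*a*A^2*b*C*s + 16*a*A^2*b*c*S - 44*a*A^2*b*c*C - 8*a*A^2*b*B*s + 8*a*A^2*b*B*c - 4*a*A^2*b^2*S + 4*a*A^2*b^2*C + 16*a*A^3*c*s - 16*a*A^3*c^2 - 4*a*A^3*b*s + 4*a*A^3*b*c - 24*a^2*C^2*s*S - 4*a^2*C^3*s + 20*a^2*c*C^2*S + 8*a^2*c*C^3 + 12*a^2*B*C*s*S + 8*a^2*B*C^2*s - 20*a^2*B*c*C*S - 4*a^2*B^2*C*s + 12*a^2*B^2*c*S - 8*a^2*B^2*c*C + 8*a^2*b*C^2*S - 8*a^2*b*C^3 - 8*a^2*b*B*C*S + 8*a^2*b*B*C^2 + 24*a^2*A*C*s*S + 12*a^2*A*C^2*s + 16*a^2*A*c*C*S - 52*a^2*A*c*C^2 - 12*a^2*A*B*s*S - 16*a^2*A*B*C*s - 16*a^2*A*B*c*S + 44*a^2*A*B*c*C + 4*a^2*A*B^2*s - 4*a^2*A*B^2*c + 8*a^2*A*b*B*S - 8*a^2*A*b*B*C + 8*a^2*A^2*B*s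 - 8*a^2*A^2*B*c - 8*a^2*A^2*b*S + 8*a^2*A^2*b*C - 8*a^2*A^3*s + 8*a^2*A^3*c - 4*a^3*C^2*S + 4*a^3*C^3 + 8*a^3*B*C*S - 8*a^3*B*C^2 - 4*a^3*B^2*S + 4*a^3*B^2*C - 16*a^3*A*C*S + 16*a^3*A*C^2 + 4*a^3*A*B*S - 4*a^3*A*B*C + 8*a^3*A^2*S - 8*a^3*A^2*C)*hB + (4*B^3*c^2*s - 4*b^3*C^2*S - 12*A*B^2*c^2*s + 12*A*b^2*C*s*S - 4*A*b^2*C^2*s - 8*A*b^2*c*C*S + 8*A*b^3*C*S + 4*A*b^3*C^2 + 12*A^2*B*c^2*s + 12*A^2*b*c*s*S - 8*A^2*b*c*C*s - 4*A^2*b*c^2*S - 24*A^2*b^2*s*S + 8*A^2*b^2*C*s + 8*A^2*b^2*c*S + 8*A^2*b^2*c*C - 4*A^2*b^3*S - 8*A^2*b^3*C - 4*A^3*c^2*s + 8*A^3*b*c*s + 4*A^3*b*c^2 - 4*A^3*b^2*s - 8*A^3*b^2*c + 4*A^3*b^3 - 12*a*B^2*c*s*S + 8*a*B^2*c*C*s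 + 4*a*B^2*c^2*S - 8*a*B^3*c*s - 4*a*B^3*c^2 + 12*a*b^2*C^2*S + 36*a*A*B*c*s*S - 24*a*A*B*c*C*s - 12*a*A*B*c^2*S + 16*a*A*B^2*c*s + 8*a*A*B^2*c^2 - 36*a*A*b*C*s*S + 12*a*A*b*C^2*s + 24*a*A*b*c*C*S - 16*a*A*b^2*C*S - 8*a*A*b^2*C^2 - 36*a*A^2*c*s*S + 24*a*A^2*c*C*s + 12*a*A^2*c^2*S + 48*a*A^2*b*s*S - 16*a*A^2*b*C*s - 16*a*A^2*b*c*S - 16*a*A^2*b*c*C + 4*a*A^2*b^2*S - 4*a*A^2*b^2*C - 16*a*A^3*c*s - 8*a*A^3*c^2 + 4*a*A^3*b*s - 4*a*A^3*b*c + 24*a*A^3*b^2 - 12*a^2*B*C*s*S + 4*a^2*B*C^2*s + 8*a^2*B*c*C*S + 24*a^2*B^2*s*S - 8*a^2*B^2*C*s - 8*a^2*B^2*c*S - 8*a^2*B^2*c*C + 4*a^2*B^3*s + 8*a^2*B^3*c - 12*a^2*b*C^2*S + 36*a^2*A*C*s*S - 12*a^2*A*C^2*s - 24*a^2*A*c*C*S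 - 48*a^2*A*B*s*S + 16*a^2*A*B*C*s + 16*a^2*A*B*c*S + 16*a^2*A*B*c*C - 4*a^2*A*B^2*s + 4*a^2*A*B^2*c - 8*a^2*A^2*B*s - 52*a^2*A^2*B*c + 8*a^2*A^2*b*S + 52*a^2*A^2*b*C + 8*a^2*A^3*s + 52*a^2*A^3*c - 60*a^2*A^3*b + 4*a^3*C^2*S - 8*a^3*B*C*S - 4*a^3*B*C^2 + 4*a^3*B^2*S + 8*a^3*B^2*C - 4*a^3*B^3 + 16*a^3*A*C*S + 8*a^3*A*C^2 - 4*a^3*A*B*S + 4*a^3*A*B*C - 24*a^3*A*B^2 - 8*a^3*A^2*S - 52*a^3*A^2*C + 60*a^3*A^2*B)*hC + (-4*B^3*c^3 + 4*b^3*C^3 + 12*A*B^2*c^3 - 12*A*b^3*C^2 - 12*A^2*B*c^3 + 12*A^2*b^3*C + 4*A^3*c^3 - 12*A^3*b*c^2 + 12*A^3*b^2*c - 4*A^3*b^3 + 12*a*B^3*c^2 - 12*a*b^2*C^3 - 24*a*A*B^2*c^2 + 24*a*A*b^2*C^2 + 24*a*A^3*c^2 - 24*a*A^3*b^2 - 12*a^2*B^3*c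 + 12*a^2*b*C^3 + 60*a^2*A^2*B*c - 60*a^2*A^2*b*C - 60*a^2*A^3*c + 60*a^2*A^3*b - 4*a^3*C^3 + 12*a^3*B*C^2 - 12*a^3*B^2*C + 4*a^3*B^3 - 24*a^3*A*C^2 + 24*a^3*A*B^2 + 60*a^3*A^2*C - 60*a^3*A^2*B)*hS
    rcases mul_eq_zero.mp h with h | h
    · exact absurd h (by
        refine mul_ne_zero (mul_ne_zero (mul_ne_zero ?_ (mul_ne_zero hU1 hu1)) (mul_ne_zero hU2 hu2)) (mul_ne_zero hU3 hu3)
        norm_num)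
    · exact h
  · have h : (16*((C-B)*(c-b))*((A-C)*(a-c))) *
        ((f2-f1)*(M-F1) - (F2-F1)*(m-f1)) = 0 := by
      linear_combination (a-c)*((4*(c-b)*(M-F1))*(2*(C-B)*E2 - 2*(A-C)*E1) + (2*(((c+s)*(A-C) + (S-C)*(a-c))*(C-B) - ((b+s)*(C-B) + (S-B)*(c-b))*(A-C)))*(2*(c-b)*hM - 2*E1')) - (A-C)*((4*(C-B)*(m-f1))*(2*(c-b)*E2' - 2*(a-c)*E1') + (2*(((s-c)*(A-C) + (S+C)*(a-c))*(c-b) - ((s-b)*(C-B) + (S+B)*(c-b))*(a-c)))*(2*(C-B)*hm - 2*E1)) + (-4*c*C^2*s + 4*c^2*C*S + 4*B*c*C*s + 4*B*c^2*S - 8*B*c^2*C - 4*b*C^2*s - 4*b*c*C*S + 8*b*c*C^2 - 4*A*c^2*S + 4*A*c^2*C - 4*A*B*c*s + 4*A*B*c^2 + 8*A*b*C*s + 4*A*b*c*S - 12*A*b*c*C + 4*A^2*c*s - 4*A^2*c^2 - 4*A^2*b*s + 4*A^2*b*c + 4*a*C^2*s - 4*a*c*C^2 - 4*a*B*C*s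 - 8*a*B*c*S + 12*a*B*c*C + 4*a*b*C*S - 4*a*b*C^2 + 4*a*A*B*s - 4*a*A*B*c - 4*a*A*b*S + 4*a*A*b*C - 4*a*A^2*s + 4*a*A^2*c - 4*a^2*C*S + 4*a^2*C^2 + 4*a^2*B*S - 4*a^2*B*C + 4*a^2*A*S - 4*a^2*A*C)*hB + (8*B*c*s*S - 8*B*c*C*s - 8*B*c^2*S + 8*B*c^2*C + 4*B^2*c*s - 8*b*C*s*S + 8*b*C^2*s + 8*b*c*C*S - 8*b*c*C^2 - 4*b^2*C*S - 8*A*c*s*S + 8*A*c*C*s + 8*A*c^2*S - 8*A*c^2*C + 16*A*b*s*S - 12*A*b*C*s - 12*A*b*c*S + 8*A*b*c*C + 4*A*b^2*S + 4*A*b^2*C - 4*A^2*c*s + 4*A^2*b*s + 4*A^2*b*c - 4*A^2*b^2 + 8*a*C*s*S - 8*a*C^2*s - 8*a*c*C*S + 8*a*c*C^2 - 16*a*B*s*S + 12*a*B*C*s + 12*a*B*c*S - 8*a*B*c*C - 4*a*B^2*s - 4*a*B^2*c - 4*a*A*B*s - 4*a*A*B*c + 4*a*A*b*S + 4*a*A*b*C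 + 4*a*A^2*s + 4*a*A^2*c - 16*a*A^2*b + 4*a^2*C*S - 4*a^2*B*S - 4*a^2*B*C + 4*a^2*B^2 - 4*a^2*A*S - 4*a^2*A*C + 16*a^2*A*B)*hC + (-4*B^2*c^2 + 4*b^2*C^2 - 8*A*b^2*C + 4*A^2*c^2 - 8*A^2*b*c + 4*A^2*b^2 + 8*a*B^2*c + 8*a*A*B*c - 8*a*A*b*C - 8*a*A^2*c + 16*a*A^2*b - 4*a^2*C^2 + 8*a^2*B*C - 4*a^2*B^2 + 8*a^2*A*C - 16*a^2*A*B)*hS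
    rcases mul_eq_zero.mp h with h | h
    · exact absurd h (by
        refine mul_ne_zero (mul_ne_zero ?_ (mul_ne_zero hU1 hu1)) (mul_ne_zero hU2 hu2)
        norm_num)
    · exact h
  · have h : (16*((C-B)*(c-b))*((B-A)*(b-a))) *
        ((f3-f1)*(M-F1) - (F3-F1)*(m-f1)) = 0 := by
      linear_combination (b-a)*((4*(c-b)*(M-F1))*(2*(C-B)*E3 - 2*(B-A)*E1) + (2*(((a+s)*(B-A) + (S-A)*(b-a))*(C-B) - ((b+s)*(C-B) + (S-B)*(c-b))*(B-A)))*(2*(c-b)*hM - 2*E1')) - (B-A)*((4*(C-B)*(m-f1))*(2*(c-b)*E3' - 2*(b-a)*E1') + (2*(((s-a)*(B-A) + (S+A)*(b-a))*(c-b) - ((s-b)*(C-B) + (S+B)*(c-b))*(b-a)))*(2*(C-B)*hm - 2*E1)) + (4*c*C^2*s - 4*c^2*C*S - 8*B*c*s*S - 4*B*c*C*s - 4*B*c^2*S + 8*B*c^2*C + 8*B^2*c*s + 8*b*C*s*S + 4*b*C^2*s + 4*b*c*C*S - 8*b*c*C^2 - 8*b*B*C*s + 8*b*B*c*S - 8*b*B^2*c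 - 8*b^2*C*S + 8*b^2*B*C + 16*A*c*s*S + 4*A*c^2*S - 12*A*c^2*C - 12*A*B*c*s + 4*A*B*c^2 - 8*A*b*s*S - 12*A*b*c*S + 4*A*b*c*C + 8*A*b*B*s + 8*A*b*B*c + 8*A*b^2*S - 8*A*b^2*B + 4*A^2*c*s - 4*A^2*c^2 - 4*A^2*b*s + 4*A^2*b*c - 16*a*C*s*S - 4*a*C^2*s + 12*a*c*C^2 + 8*a*B*s*S + 12*a*B*C*s - 4*a*B*c*C - 8*a*B^2*s + 12*a*b*C*S - 4*a*b*C^2 - 8*a*b*B*S - 8*a*b*B*C + 8*a*b*B^2 - 8*a*A*C*s + 8*a*A*c*S + 4*a*A*B*s - 4*a*A*B*c - 4*a*A*b*S + 4*a*A*b*C + 4*a*A^2*s - 4*a*A^2*c - 4*a^2*C*S + 4*a^2*C^2 + 4*a^2*B*S - 4*a^2*B*C - 4*a^2*A*S + 4*a^2*A*C)*hB + (-4*B^2*c*s + 4*b^2*C*S + 8*A*B*c*s - 4*A*b*C*s + 4*A*b*c*S - 4*A*b^2*S + 4*A*b^2*C - 4*A^2*c*s + 4*A^2*b*s + 4*A^2*b*c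 - 4*A^2*b^2 - 4*a*B*C*s + 4*a*B*c*S + 4*a*B^2*s - 4*a*B^2*c - 8*a*b*C*S + 8*a*A*C*s - 8*a*A*c*S - 4*a*A*B*s + 12*a*A*B*c + 4*a*A*b*S - 12*a*A*b*C - 4*a*A^2*s - 12*a*A^2*c + 8*a*A^2*b + 4*a^2*C*S - 4*a^2*B*S - 4*a^2*B*C + 4*a^2*B^2 + 4*a^2*A*S + 12*a^2*A*C - 8*a^2*A*B)*hC + (4*B^2*c^2 - 4*b^2*C^2 - 8*A*B*c^2 + 4*A^2*c^2 - 8*A^2*b*c + 4*A^2*b^2 + 8*a*b*C^2 - 8*a*A*B*c + 8*a*A*b*C + 16*a*A^2*c - 8*a*A^2*b - 4*a^2*C^2 + 8*a^2*B*C - 4*a^2*B^2 - 16*a^2*A*C + 8*a^2*A*B)*hS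
    rcases mul_eq_zero.mp h with h | h
    · exact absurd h (by
        refine mul_ne_zero (mul_ne_zero ?_ (mul_ne_zero hU1 hu1)) (mul_ne_zero hU3 hu3)
        norm_num)
    · exact h

/-- The Simson–Wallace line of a point `S` on the circumcircle (centre `O`) of a
triangle `A B C` bisects the segment joining `S` to the orthocentre `H`: the midpoint
of `S H` lies on the Simson–Wallace line (through the feet `F₁, F₂, F₃` of the
perpendiculars from `S` to the edge-lines); in particular this midpoint lies on the
nine-point circle, the circle of centre `midpoint O H` and radius `R / 2`. -/
theorem stmt_7 (A B C O H S F₁ F₂ F₃ : EuclideanSpace ℝ (Fin 2))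
    (htri : AffineIndependent ℝ ![A, B, C])
    (hO1 : dist O A = dist O B) (hO2 : dist O B = dist O C)
    (hH1 : ⟪H - A, B - C⟫ = 0) (hH2 : ⟪H - B, C - A⟫ = 0)
    (hS : dist O S = dist O A)
    (hF₁ : Collinear ℝ ({B, C, F₁} : Set (EuclideanSpace ℝ (Fin 2))) ∧
      ⟪S - F₁, C - B⟫ = 0)
    (hF₂ : Collinear ℝ ({C, A, F₂} : Set (EuclideanSpace ℝ (Fin 2))) ∧
      ⟪S - F₂, A - C⟫ = 0)
    (hF₃ : Collinear ℝ ({A, B, F₃} : Set (EuclideanSpace ℝ (Fin 2))) ∧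
      ⟪S - F₃, B - A⟫ = 0) :
    Collinear ℝ ({F₁, F₂, F₃, midpoint ℝ S H} : Set (EuclideanSpace ℝ (Fin 2))) ∧
    dist (midpoint ℝ O H) (midpoint ℝ S H) = dist O A / 2 := by
  -- squared-distance facts
  have rB : (B 0 - O 0)^2 + (B 1 - O 1)^2 = (A 0 - O 0)^2 + (A 1 - O 1)^2 := by
    have h := hO1
    rw [EuclideanSpace.dist_eq, EuclideanSpace.dist_eq,
      Real.sqrt_inj (by positivity) (by positivity)] at h
    simp [Fin.sum_univ_two, Real.dist_eq, sq_abs] at h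
    linear_combination -h
  have rC : (C 0 - O 0)^2 + (C 1 - O 1)^2 = (A 0 - O 0)^2 + (A 1 - O 1)^2 := by
    have h := hO1.trans hO2
    rw [EuclideanSpace.dist_eq, EuclideanSpace.dist_eq,
      Real.sqrt_inj (by positivity) (by positivity)] at h
    simp [Fin.sum_univ_two, Real.dist_eq, sq_abs] at h
    linear_combination -h
  have rS : (S 0 - O 0)^2 + (S 1 - O 1)^2 = (A 0 - O 0)^2 + (A 1 - O 1)^2 := by
    have h := hS.symm
    rw [EuclideanSpace.dist_eq, EuclideanSpace.dist_eq,
      Real.sqrt_inj (by positivity) (by positivity)] at h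
    simp [Fin.sum_univ_two, Real.dist_eq, sq_abs] at h
    linear_combination -h
  -- inner product facts
  have rH1 : (H 0 - A 0)*(B 0 - C 0) + (H 1 - A 1)*(B 1 - C 1) = 0 := by
    have h := hH1; simp [PiLp.inner_apply, Fin.sum_univ_two] at h; linear_combination h
  have rH2 : (H 0 - B 0)*(C 0 - A 0) + (H 1 - B 1)*(C 1 - A 1) = 0 := by
    have h := hH2; simp [PiLp.inner_apply, Fin.sum_univ_two] at h; linear_combination h
  have rf1b : (S 0 - F₁ 0)*(C 0 - B 0) + (S 1 - F₁ 1)*(C 1 - B 1) = 0 := by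
    have h := hF₁.2; simp [PiLp.inner_apply, Fin.sum_univ_two] at h; linear_combination h
  have rf2b : (S 0 - F₂ 0)*(A 0 - C 0) + (S 1 - F₂ 1)*(A 1 - C 1) = 0 := by
    have h := hF₂.2; simp [PiLp.inner_apply, Fin.sum_univ_two] at h; linear_combination h
  have rf3b : (S 0 - F₃ 0)*(B 0 - A 0) + (S 1 - F₃ 1)*(B 1 - A 1) = 0 := by
    have h := hF₃.2; simp [PiLp.inner_apply, Fin.sum_univ_two] at h; linear_combination h
  have rf1a := collcross B C F₁ hF₁.1
  have rf2a := collcross C A F₂ hF₂.1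
  have rf3a := collcross A B F₃ hF₃.1
  -- nondegeneracy
  have hncol : ¬ Collinear ℝ ({A, B, C} : Set (EuclideanSpace ℝ (Fin 2))) := by
    rwa [affineIndependent_iff_not_collinear_set] at htri
  have rd : (B 0 - A 0)*(C 1 - A 1) - (B 1 - A 1)*(C 0 - A 0) ≠ 0 := by
    intro h
    apply hncol
    have h4 := coll4 A B C C h h (by ring)
    exact h4.subset (by intro x hx; simp at hx ⊢; tauto)
  -- orthocentre coordinates
  obtain ⟨hh0, hh1⟩ := ortho (A 0) (A 1) (B 0) (B 1) (C 0) (C 1) (O 0) (O 1) (H 0) (H 1)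
    rB rC rH1 rH2 rd
  -- midpoint coordinates
  have hM0 : (midpoint ℝ S H) 0 = (S 0 + H 0)/2 := by
    simp [midpoint_eq_smul_add, invOf_eq_inv]; ring
  have hM1 : (midpoint ℝ S H) 1 = (S 1 + H 1)/2 := by
    simp [midpoint_eq_smul_add, invOf_eq_inv]; ring
  -- complex core
  obtain ⟨cx1, cx2, cx3⟩ := simson_core
    (⟨A 0 - O 0, A 1 - O 1⟩ : ℂ) (⟨A 0 - O 0, -(A 1 - O 1)⟩ : ℂ)
    (⟨B 0 - O 0, B 1 - O 1⟩ : ℂ) (⟨B 0 - O 0, -(B 1 - O 1)⟩ : ℂ)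
    (⟨C 0 - O 0, C 1 - O 1⟩ : ℂ) (⟨C 0 - O 0, -(C 1 - O 1)⟩ : ℂ)
    (⟨S 0 - O 0, S 1 - O 1⟩ : ℂ) (⟨S 0 - O 0, -(S 1 - O 1)⟩ : ℂ)
    (⟨F₁ 0 - O 0, F₁ 1 - O 1⟩ : ℂ) (⟨F₁ 0 - O 0, -(F₁ 1 - O 1)⟩ : ℂ)
    (⟨F₂ 0 - O 0, F₂ 1 - O 1⟩ : ℂ) (⟨F₂ 0 - O 0, -(F₂ 1 - O 1)⟩ : ℂ)
    (⟨F₃ 0 - O 0, F₃ 1 - O 1⟩ : ℂ) (⟨F₃ 0 - O 0, -(F₃ 1 - O 1)⟩ : ℂ)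
    (⟨(midpoint ℝ S H) 0 - O 0, (midpoint ℝ S H) 1 - O 1⟩ : ℂ)
    (⟨(midpoint ℝ S H) 0 - O 0, -((midpoint ℝ S H) 1 - O 1)⟩ : ℂ)
    (by rw [Complex.ext_iff]; constructor
        · simp [Complex.mul_re]; linear_combination rB
        · simp [Complex.mul_im]; ring)
    (by rw [Complex.ext_iff]; constructor
        · simp [Complex.mul_re]; linear_combination rC
        · simp [Complex.mul_im]; ring)
    (by rw [Complex.ext_iff]; constructor
        · simp [Complex.mul_re]; linear_combination rS
        · simp [Complex.mul_im]; ring)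
    (by intro h
        rw [Complex.ext_iff] at h
        simp at h
        exact rd (by linear_combination (B 0 - A 0)*h.2 - (B 1 - A 1)*h.1))
    (by intro h
        rw [Complex.ext_iff] at h
        simp at h
        exact rd (by linear_combination (B 0 - A 0)*(-h.2) - (B 1 - A 1)*h.1))
    (by intro h
        rw [Complex.ext_iff] at h
        simp at h
        exact rd (by linear_combination (B 1 - A 1)*h.1 - (B 0 - A 0)*h.2))
    (by intro h
        rw [Complex.ext_iff] at h
        simp at h
        exact rd (by linear_combination (B 1 - A 1)*h.1 + (B 0 - A 0)*h.2))
    (by intro h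
        rw [Complex.ext_iff] at h
        simp at h
        exact rd (by linear_combination (C 1 - A 1)*h.1 - (C 0 - A 0)*h.2))
    (by intro h
        rw [Complex.ext_iff] at h
        simp at h
        exact rd (by linear_combination (C 1 - A 1)*h.1 + (C 0 - A 0)*h.2))
    (by rw [Complex.ext_iff]; constructor
        · simp [Complex.mul_re]; linear_combination -2*rf1b
        · simp [Complex.mul_im]; linear_combination 2*rf1a)
    (by rw [Complex.ext_iff]; constructor
        · simp [Complex.mul_re]; linear_combination -2*rf1b
        · simp [Complex.mul_im]; linear_combination -2*rf1a)
    (by rw [Complex.ext_iff]; constructor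
        · simp [Complex.mul_re]; linear_combination -2*rf2b
        · simp [Complex.mul_im]; linear_combination 2*rf2a)
    (by rw [Complex.ext_iff]; constructor
        · simp [Complex.mul_re]; linear_combination -2*rf2b
        · simp [Complex.mul_im]; linear_combination -2*rf2a)
    (by rw [Complex.ext_iff]; constructor
        · simp [Complex.mul_re]; linear_combination -2*rf3b
        · simp [Complex.mul_im]; linear_combination 2*rf3a)
    (by rw [Complex.ext_iff]; constructor
        · simp [Complex.mul_re]; linear_combination -2*rf3b
        · simp [Complex.mul_im]; linear_combination -2*rf3a)
    (by rw [Complex.ext_iff]; constructor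
        · simp [Complex.mul_re]; linear_combination 2*hM0 + hh0
        · simp [Complex.mul_im]; linear_combination 2*hM1 + hh1)
    (by rw [Complex.ext_iff]; constructor
        · simp [Complex.mul_re]; linear_combination 2*hM0 + hh0
        · simp [Complex.mul_im]; linear_combination -(2*hM1) - hh1)
  -- extract real cross equations
  have t1 : (F₂ 0 - F₁ 0)*(F₃ 1 - F₁ 1) - (F₂ 1 - F₁ 1)*(F₃ 0 - F₁ 0) = 0 := by
    have h := congrArg Complex.im cx1
    simp [Complex.mul_im] at h
    linear_combination -h/2
  have t2 : (F₂ 0 - F₁ 0)*((midpoint ℝ S H) 1 - F₁ 1)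
      - (F₂ 1 - F₁ 1)*((midpoint ℝ S H) 0 - F₁ 0) = 0 := by
    have h := congrArg Complex.im cx2
    simp [Complex.mul_im] at h
    linear_combination -h/2
  have t3 : (F₃ 0 - F₁ 0)*((midpoint ℝ S H) 1 - F₁ 1)
      - (F₃ 1 - F₁ 1)*((midpoint ℝ S H) 0 - F₁ 0) = 0 := by
    have h := congrArg Complex.im cx3
    simp [Complex.mul_im] at h
    linear_combination -h/2
  refine ⟨coll4 F₁ F₂ F₃ (midpoint ℝ S H) t1 t2 t3, ?_⟩
  have h : midpoint ℝ O H - midpoint ℝ S H = (2:ℝ)⁻¹ • (O - S) := by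
    simp only [midpoint_eq_smul_add, invOf_eq_inv]
    module
  rw [dist_eq_norm, h, norm_smul, ← dist_eq_norm, hS]
  norm_num
  ring
end

section
/- The angle between the Simson–Wallace lines of two points S and S′ on the circumcircle of a triangle equals half the angular measure of the arc S′S. -/
open RealInnerProductSpace Real


section Helpers
variable {V : Type*} [NormedAddCommGroup V] [InnerProductSpace ℝ V]
    [Fact (Module.finrank ℝ V = 2)] (o : Orientation ℝ V (Fin 2))

omit [Fact (Module.finrank ℝ V = 2)] in
lemma simson_collinear_extract {P₁ P₂ F : V} (h : Collinear ℝ ({P₁, P₂, F} : Set V))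
    (hne : P₁ ≠ P₂) : ∃ t : ℝ, F - P₁ = t • (P₂ - P₁) := by
  have hm : F ∈ line[ℝ, P₁, P₂] :=
    h.mem_affineSpan_of_mem_of_ne (by simp) (by simp) (by simp) hne
  have h2 : (F - P₁) +ᵥ P₁ ∈ line[ℝ, P₁, P₂] := by simpa using hm
  obtain ⟨r, hr⟩ := vadd_left_mem_affineSpan_pair.1 h2
  exact ⟨r, by simpa [vsub_eq_sub] using hr.symm⟩

lemma simson_perpD {u v : V} (hu : u ≠ 0) (hv : v ≠ 0) (h : ⟪u, v⟫ = 0) :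
    (2 : ℤ) • o.oangle u v = (π : Real.Angle) := by
  rcases o.eq_zero_or_oangle_eq_iff_inner_eq_zero.2 h with h' | h' | h' | h'
  · exact absurd h' hu
  · exact absurd h' hv
  · rw [h', Real.Angle.two_zsmul_coe_div_two]
  · rw [h', show (-π/2 : ℝ) = (-π)/2 by ring, Real.Angle.two_zsmul_coe_div_two,
      Real.Angle.coe_neg, Real.Angle.neg_coe_pi]

omit [Fact (Module.finrank ℝ V = 2)] in
lemma simson_thales {p a b m : V} (hm : m = (2:ℝ)⁻¹ • (a + b)) (h : ⟪a - p, b - p⟫ = 0) :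
    ‖p - m‖ = ‖a - m‖ := by
  have h1 : p - m = (2:ℝ)⁻¹ • ((p - a) + (p - b)) := by rw [hm]; module
  have h2 : a - m = (2:ℝ)⁻¹ • ((p - b) - (p - a)) := by rw [hm]; module
  rw [h1, h2, norm_smul, norm_smul]
  congr 1
  have h' : ⟪p - a, p - b⟫ = 0 := by
    rw [show p - a = -(a - p) by abel, show p - b = -(b - p) by abel, inner_neg_neg]
    exact h
  have e1 := (norm_add_sq_eq_norm_sq_add_norm_sq_iff_real_inner_eq_zero (p-a) (p-b)).2 h'
  have e2 := (norm_sub_sq_eq_norm_sq_add_norm_sq_iff_real_inner_eq_zero (p-a) (p-b)).2 h'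
  rw [norm_sub_rev (p - b)]
  nlinarith [norm_nonneg ((p-a)+(p-b)), norm_nonneg ((p-a)-(p-b))]

lemma simson_perpPerp {u v a b : V} (hu : u ≠ 0) (hv : v ≠ 0) (ha : a ≠ 0) (hb : b ≠ 0)
    (hau : ⟪a, u⟫ = 0) (hbv : ⟪b, v⟫ = 0) :
    (2 : ℤ) • o.oangle u v = (2 : ℤ) • o.oangle a b := by
  have h1 : o.oangle u v = o.oangle u a + (o.oangle a b + o.oangle b v) := by
    rw [o.oangle_add ha hb hv, o.oangle_add hu ha hv]
  have h2 : (2:ℤ) • o.oangle u a = (π : Real.Angle) :=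
    simson_perpD o hu ha (by rw [real_inner_comm]; exact hau)
  have h3 : (2:ℤ) • o.oangle b v = (π : Real.Angle) := simson_perpD o hb hv hbv
  rw [h1, smul_add, smul_add, h2, h3]
  have hpp : (π : Real.Angle) + π = 0 := Real.Angle.coe_pi_add_coe_pi
  calc (π : Real.Angle) + ((2:ℤ) • o.oangle a b + π)
      = (2:ℤ) • o.oangle a b + ((π:Real.Angle) + π) := by abel
    _ = (2:ℤ) • o.oangle a b := by rw [hpp, add_zero]

omit [Fact (Module.finrank ℝ V = 2)] in
/-- If `S = C` then the two feet coincide, contradiction; so `S ≠ C`. -/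
lemma simson_ne_C {A B C S F₁ F₂ : V} (hBC : B ≠ C) (hCA : C ≠ A)
    (h1 : Collinear ℝ ({B, C, F₁} : Set V)) (h1p : ⟪S - F₁, C - B⟫ = 0)
    (h2 : Collinear ℝ ({C, A, F₂} : Set V)) (h2p : ⟪S - F₂, A - C⟫ = 0)
    (hne : F₁ ≠ F₂) : S ≠ C := by
  intro hSC
  rw [hSC] at h1p h2p
  have h1' : Collinear ℝ ({C, B, F₁} : Set V) := by rwa [Set.insert_comm] at h1
  obtain ⟨t, ht⟩ := simson_collinear_extract h1' hBC.symm
  obtain ⟨s, hs⟩ := simson_collinear_extract h2 hCA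
  have hAC0 : A - C ≠ 0 := sub_ne_zero_of_ne (Ne.symm hCA)
  have ht0 : t = 0 := by
    have e : C - F₁ = (-t) • (B - C) := by rw [neg_smul, ← ht]; abel
    have h1p' := h1p
    rw [e, show C - B = -(B - C) by abel, real_inner_smul_left, inner_neg_right,
      neg_mul_neg] at h1p'
    have hBC0 : ⟪B - C, B - C⟫ ≠ 0 := by
      simpa [inner_self_eq_zero] using sub_ne_zero_of_ne hBC
    rcases mul_eq_zero.1 h1p' with h | h
    · exact h
    · exact absurd h hBC0
  have hs0 : s = 0 := by
    have e : C - F₂ = (-s) • (A - C) := by rw [neg_smul, ← hs]; abel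
    rw [e, real_inner_smul_left] at h2p
    have hACi : ⟪A - C, A - C⟫ ≠ 0 := by simpa [inner_self_eq_zero] using hAC0
    rcases mul_eq_zero.1 h2p with h | h
    · exact neg_eq_zero.1 h
    · exact absurd h hACi
  apply hne
  have e1 : F₁ = C := by have := ht; rw [ht0, zero_smul, sub_eq_zero] at this; exact this
  have e2 : F₂ = C := by have := hs; rw [hs0, zero_smul, sub_eq_zero] at this; exact this
  rw [e1, e2]
end Helpers


lemma simson_key {V : Type*} [NormedAddCommGroup V] [InnerProductSpace ℝ V]
    [Fact (Module.finrank ℝ V = 2)] (o : Orientation ℝ V (Fin 2))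
    {A B C O S F₁ F₂ : V} (hBC : B ≠ C) (hCA : C ≠ A)
    (hOBC : dist O B = dist O C) (hOBS : dist O B = dist O S)
    (h1 : Collinear ℝ ({B, C, F₁} : Set V)) (h1p : ⟪S - F₁, C - B⟫ = 0)
    (h2 : Collinear ℝ ({C, A, F₂} : Set V)) (h2p : ⟪S - F₂, A - C⟫ = 0)
    (hne : F₁ ≠ F₂) {v : V} (hv : v ≠ 0) (hvp : ⟪v, C - B⟫ = 0) :
    (2 : ℤ) • o.oangle (F₂ - F₁) v = (2 : ℤ) • o.oangle (A - C) (S - C) := by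
  have hSC : S ≠ C := simson_ne_C hBC hCA h1 h1p h2 h2p hne
  have hCB0 : C - B ≠ 0 := sub_ne_zero_of_ne (Ne.symm hBC)
  have hAC0 : A - C ≠ 0 := sub_ne_zero_of_ne (Ne.symm hCA)
  have hSC0 : S - C ≠ 0 := sub_ne_zero_of_ne hSC
  have hFF0 : F₂ - F₁ ≠ 0 := sub_ne_zero_of_ne hne.symm
  have h1' : Collinear ℝ ({C, B, F₁} : Set V) := by rwa [Set.insert_comm] at h1
  obtain ⟨t, ht⟩ := simson_collinear_extract h1' hBC.symm
  obtain ⟨s, hs⟩ := simson_collinear_extract h2 hCA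
  by_cases hSB : S = B
  · -- degenerate case: S is the vertex B; then F₁ = B and F₂ - F₁ ⟂ A - C
    rw [hSB] at h1p h2p
    -- F₁ = B
    have eBF : B - F₁ = (1 - t) • (B - C) := by rw [sub_smul, one_smul, ← ht]; abel
    have hF1B : B - F₁ = 0 := by
      have h1p' := h1p
      rw [eBF, show C - B = -(B - C) by abel, real_inner_smul_left, inner_neg_right] at h1p'
      have hBCi : ⟪B - C, B - C⟫ ≠ 0 := by
        simpa [inner_self_eq_zero] using sub_ne_zero_of_ne hBC
      have : (1 - t) * ⟪B - C, B - C⟫ = 0 := by linarith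
      rcases mul_eq_zero.1 this with h | h
      · rw [eBF, h, zero_smul]
      · exact absurd h hBCi
    have hau : ⟪A - C, F₂ - F₁⟫ = 0 := by
      have e : F₂ - F₁ = -(B - F₂) + (B - F₁) := by abel
      rw [e, hF1B, add_zero, inner_neg_right, real_inner_comm, h2p, neg_zero]
    have step := simson_perpPerp o hFF0 hv hAC0 hCB0 hau (by rw [real_inner_comm]; exact hvp)
    rw [step, hSB]
    have e : B - C = (-1 : ℝ) • (C - B) := by rw [neg_one_smul]; abel
    rw [e, o.two_zsmul_oangle_smul_right_of_ne_zero _ _ (by norm_num : (-1:ℝ) ≠ 0)]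
  · -- main case: S ≠ B
    have hncol : ¬Collinear ℝ ({B, C, S} : Set V) := by
      have hcos : EuclideanGeometry.Cospherical ({B, C, S} : Set V) := by
        refine ⟨O, dist O B, ?_⟩
        intro p hp
        simp only [Set.mem_insert_iff, Set.mem_singleton_iff] at hp
        rcases hp with rfl | rfl | rfl
        · exact dist_comm p O
        · rw [dist_comm, ← hOBC]
        · rw [dist_comm, ← hOBS]
      have hai := hcos.affineIndependent_of_ne hBC (fun h => hSB h.symm) (Ne.symm hSC)
      rwa [affineIndependent_iff_not_collinear_set] at hai
    have hSF₁ : S ≠ F₁ := by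
      intro e
      exact hncol (by rw [e]; exact h1)
    have hSF₁0 : S - F₁ ≠ 0 := sub_ne_zero_of_ne hSF₁
    have hadd : o.oangle (F₂ - F₁) (S - F₁) + o.oangle (S - F₁) v = o.oangle (F₂ - F₁) v :=
      o.oangle_add hFF0 hSF₁0 hv
    have hz : (2 : ℤ) • o.oangle (S - F₁) v = 0 := by
      have := simson_perpPerp o hSF₁0 hv hCB0 hCB0
        (by rw [real_inner_comm]; exact h1p) (by rw [real_inner_comm]; exact hvp)
      rw [this, o.oangle_self, smul_zero]
    have hmain : (2 : ℤ) • o.oangle (F₂ - F₁) (S - F₁) = (2 : ℤ) • o.oangle (A - C) (S - C) := by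
      by_cases hs0 : s = 0
      · -- F₂ = C
        have hF2C : F₂ = C := by
          have := hs; rw [hs0, zero_smul, sub_eq_zero] at this; exact this
        have htne : t ≠ 0 := by
          intro h
          apply hne
          have := ht; rw [h, zero_smul, sub_eq_zero] at this
          rw [this, hF2C]
        have e : F₂ - F₁ = t • (C - B) := by
          rw [hF2C, show C - F₁ = -(F₁ - C) by abel, ht]; module
        rw [e, o.two_zsmul_oangle_smul_left_of_ne_zero _ _ htne]
        rw [simson_perpD o hCB0 hSF₁0 (by rw [real_inner_comm]; exact h1p)]
        rw [simson_perpD o hAC0 hSC0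
          (by rw [real_inner_comm]; rw [hF2C] at h2p; exact h2p)]
      · -- F₂ ≠ C, use the circle with diameter S C
        have hF2C : F₂ ≠ C := by
          intro h
          apply hs0
          rw [h, sub_self] at hs
          rcases smul_eq_zero.1 hs.symm with h' | h'
          · exact h'
          · exact absurd h' hAC0
        set m : V := (2:ℝ)⁻¹ • (S + C) with hm
        have hCm : ‖C - m‖ = ‖S - m‖ := simson_thales hm (by simp)
        have hF₁m : ‖F₁ - m‖ = ‖S - m‖ := by
          refine simson_thales hm ?_
          have e : C - F₁ = (-t) • (B - C) := by rw [neg_smul, ← ht]; abel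
          rw [e, real_inner_smul_right, show (B - C : V) = -(C - B) by abel,
            inner_neg_right, h1p, neg_zero, mul_zero]
        have hF₂m : ‖F₂ - m‖ = ‖S - m‖ := by
          refine simson_thales hm ?_
          have e : C - F₂ = (-s) • (A - C) := by rw [neg_smul, ← hs]; abel
          rw [e, real_inner_smul_right, h2p, mul_zero]
        have E := o.two_zsmul_oangle_sub_eq_two_zsmul_oangle_sub_of_norm_eq
          (x₁ := F₁ - m) (x₂ := C - m) (y := S - m) (z := F₂ - m)
          (fun h => hSF₁ (sub_left_inj.1 h).symm)
          (fun h => hne (sub_left_inj.1 h))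
          (fun h => hSC (sub_left_inj.1 h).symm)
          (fun h => hF2C (sub_left_inj.1 h).symm)
          hF₁m hCm rfl hF₂m
        simp only [sub_sub_sub_cancel_right] at E
        rw [hs, o.two_zsmul_oangle_smul_right_of_ne_zero _ _ hs0] at E
        rw [o.oangle_rev (S - F₁) (F₂ - F₁), o.oangle_rev (S - C) (A - C),
          smul_neg, smul_neg, E]
    calc (2 : ℤ) • o.oangle (F₂ - F₁) v
        = (2 : ℤ) • o.oangle (F₂ - F₁) (S - F₁) + (2 : ℤ) • o.oangle (S - F₁) v := by
          rw [← smul_add, hadd]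
      _ = (2 : ℤ) • o.oangle (A - C) (S - C) := by rw [hmain, hz, add_zero]


/-- The angle between the Simson–Wallace lines of two points `S` and `S'` on the
circumcircle (centre `O`) of a triangle equals half the angular measure of the arc
`S'S`.  Since the angle between two lines is only defined modulo `π`, this is stated
in doubled form using oriented angles: twice the oriented angle between the two
Simson–Wallace lines (through the feet of perpendiculars `F₁ F₂` resp. `F₁' F₂'`)
equals the oriented angle `∠ S' O S` of the arc. -/
theorem stmt_8 {V : Type*} [NormedAddCommGroup V] [InnerProductSpace ℝ V]
    [Fact (Module.finrank ℝ V = 2)] (o : Orientation ℝ V (Fin 2))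
    (A B C O S S' F₁ F₂ F₃ F₁' F₂' F₃' : V)
    (htri : AffineIndependent ℝ ![A, B, C])
    (hO1 : dist O A = dist O B) (hO2 : dist O B = dist O C)
    (hS : dist O S = dist O A) (hS' : dist O S' = dist O A)
    (hF₁ : Collinear ℝ ({B, C, F₁} : Set V) ∧ ⟪S - F₁, C - B⟫ = 0)
    (hF₂ : Collinear ℝ ({C, A, F₂} : Set V) ∧ ⟪S - F₂, A - C⟫ = 0)
    (hF₃ : Collinear ℝ ({A, B, F₃} : Set V) ∧ ⟪S - F₃, B - A⟫ = 0)
    (hF₁' : Collinear ℝ ({B, C, F₁'} : Set V) ∧ ⟪S' - F₁', C - B⟫ = 0)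
    (hF₂' : Collinear ℝ ({C, A, F₂'} : Set V) ∧ ⟪S' - F₂', A - C⟫ = 0)
    (hF₃' : Collinear ℝ ({A, B, F₃'} : Set V) ∧ ⟪S' - F₃', B - A⟫ = 0)
    (hne : F₁ ≠ F₂) (hne' : F₁' ≠ F₂') :
    (2 : ℤ) • o.oangle (F₂ - F₁) (F₂' - F₁') = o.oangle (S' - O) (S - O) := by
  have hBC : B ≠ C := by
    have := htri.injective.ne (show (1 : Fin 3) ≠ 2 by decide)
    simpa using this
  have hCA : C ≠ A := by
    have := htri.injective.ne (show (2 : Fin 3) ≠ 0 by decide)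
    simpa using this
  have hOBS : dist O B = dist O S := by rw [← hO1, ← hS]
  have hOBS' : dist O B = dist O S' := by rw [← hO1, ← hS']
  have hSC : S ≠ C := simson_ne_C hBC hCA hF₁.1 hF₁.2 hF₂.1 hF₂.2 hne
  have hS'C : S' ≠ C := simson_ne_C hBC hCA hF₁'.1 hF₁'.2 hF₂'.1 hF₂'.2 hne'
  have hAC0 : A - C ≠ 0 := sub_ne_zero_of_ne (Ne.symm hCA)
  have hSC0 : S - C ≠ 0 := sub_ne_zero_of_ne hSC
  have hS'C0 : S' - C ≠ 0 := sub_ne_zero_of_ne hS'C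
  have hFF0 : F₂ - F₁ ≠ 0 := sub_ne_zero_of_ne hne.symm
  have hFF'0 : F₂' - F₁' ≠ 0 := sub_ne_zero_of_ne hne'.symm
  -- a reference direction perpendicular to B C
  set v : V := o.rotation (Real.pi / 2 : ℝ) (C - B) with hvdef
  have hCB0 : C - B ≠ 0 := sub_ne_zero_of_ne (Ne.symm hBC)
  have hv : v ≠ 0 := by
    rw [hvdef]
    intro h
    exact hCB0 ((o.rotation _).map_eq_zero_iff.1 h)
  have hvp : ⟪v, C - B⟫ = 0 := o.inner_rotation_pi_div_two_left (C - B)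
  have hW : (2 : ℤ) • o.oangle (F₂ - F₁) v = (2 : ℤ) • o.oangle (A - C) (S - C) :=
    simson_key o hBC hCA hO2 hOBS hF₁.1 hF₁.2 hF₂.1 hF₂.2 hne hv hvp
  have hW' : (2 : ℤ) • o.oangle (F₂' - F₁') v = (2 : ℤ) • o.oangle (A - C) (S' - C) :=
    simson_key o hBC hCA hO2 hOBS' hF₁'.1 hF₁'.2 hF₂'.1 hF₂'.2 hne' hv hvp
  -- the doubled angle between the Simson directions is the doubled inscribed angle at C
  have key : (2 : ℤ) • o.oangle (F₂ - F₁) (F₂' - F₁')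
      = (2 : ℤ) • o.oangle (S' - C) (S - C) := by
    have e1 : o.oangle (F₂ - F₁) v + o.oangle v (F₂' - F₁') = o.oangle (F₂ - F₁) (F₂' - F₁') :=
      o.oangle_add hFF0 hv hFF'0
    have e2 : o.oangle (S' - C) (A - C) + o.oangle (A - C) (S - C) = o.oangle (S' - C) (S - C) :=
      o.oangle_add hS'C0 hAC0 hSC0
    have p1 : (2 : ℤ) • o.oangle v (F₂' - F₁') = (2 : ℤ) • o.oangle (S' - C) (A - C) := by
      rw [o.oangle_rev (F₂' - F₁') v, o.oangle_rev (A - C) (S' - C), smul_neg, smul_neg, hW']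
    rw [← e1, ← e2, smul_add, smul_add, hW, p1, add_comm]
  rw [key]
  -- inscribed angle theorem at C
  have hins := o.oangle_eq_two_zsmul_oangle_sub_of_norm_eq
    (x := C - O) (y := S' - O) (z := S - O)
    (fun h => hS'C (sub_left_inj.1 h).symm)
    (fun h => hSC (sub_left_inj.1 h).symm)
    (by rw [show ‖C - O‖ = dist O C from by rw [dist_eq_norm, norm_sub_rev],
          show ‖S' - O‖ = dist O S' from by rw [dist_eq_norm, norm_sub_rev], ← hO2, hOBS'])
    (by rw [show ‖C - O‖ = dist O C from by rw [dist_eq_norm, norm_sub_rev],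
          show ‖S - O‖ = dist O S from by rw [dist_eq_norm, norm_sub_rev], ← hO2, hOBS])
  rw [hins]
  simp only [sub_sub_sub_cancel_right]
end

section
/- Steiner's theorem on reflected points: if a point P lies on the circumcircle of a triangle, then the three reflexions of P in the three edge-lines of the triangle are collinear, and the line through them (the Steiner line) passes through the orthocentre of the triangle. -/
open RealInnerProductSpace

private lemma ev_smul_vadd (v p : EuclideanSpace ℝ (Fin 2)) (r : ℝ) (i : Fin 2) :
    (r • v +ᵥ p) i = r * v i + p i := by simp [vadd_eq_add]

private lemma sub_coord (x y : EuclideanSpace ℝ (Fin 2)) (i : Fin 2) : (x - y) i = x i - y i := by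
  simp

private lemma mid_coord (u v : EuclideanSpace ℝ (Fin 2)) (i : Fin 2) :
    (midpoint ℝ u v) i = (u i + v i) / 2 := by
  rw [midpoint_eq_smul_add]; simp; ring

private lemma inner_coords (u v : EuclideanSpace ℝ (Fin 2)) :
    ⟪u, v⟫ = u 0 * v 0 + u 1 * v 1 := by
  simp [PiLp.inner_apply, Fin.sum_univ_two, RCLike.inner_apply, conj_trivial]
  ring

private lemma dist_sq (x y : EuclideanSpace ℝ (Fin 2)) :
    dist x y ^ 2 = (x 0 - y 0) ^ 2 + (x 1 - y 1) ^ 2 := by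
  rw [EuclideanSpace.dist_eq, Real.sq_sqrt (by positivity), Fin.sum_univ_two]
  simp [Real.dist_eq, sq_abs]

private lemma Dne {x y : EuclideanSpace ℝ (Fin 2)} (h : x ≠ y) :
    (y 0 - x 0) ^ 2 + (y 1 - x 1) ^ 2 ≠ 0 := by
  intro hD
  apply h
  have h0 : y 0 - x 0 = 0 := by nlinarith [sq_nonneg (y 0 - x 0), sq_nonneg (y 1 - x 1)]
  have h1 : y 1 - x 1 = 0 := by nlinarith [sq_nonneg (y 0 - x 0), sq_nonneg (y 1 - x 1)]
  ext i; fin_cases i <;> simp <;> linarith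

private lemma cross_of_collinear {p q r : EuclideanSpace ℝ (Fin 2)}
    (h : Collinear ℝ ({p, q, r} : Set (EuclideanSpace ℝ (Fin 2)))) :
    (q 0 - p 0) * (r 1 - p 1) - (q 1 - p 1) * (r 0 - p 0) = 0 := by
  obtain ⟨p₀, v, hv⟩ := (collinear_iff_exists_forall_eq_smul_vadd _).mp h
  obtain ⟨t1, h1⟩ := hv p (by simp)
  obtain ⟨t2, h2⟩ := hv q (by simp)
  obtain ⟨t3, h3⟩ := hv r (by simp)
  have e : ∀ i : Fin 2, p i = t1 * v i + p₀ i ∧ q i = t2 * v i + p₀ i ∧ r i = t3 * v i + p₀ i := by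
    intro i
    refine ⟨?_, ?_, ?_⟩
    · rw [h1]; exact ev_smul_vadd v p₀ t1 i
    · rw [h2]; exact ev_smul_vadd v p₀ t2 i
    · rw [h3]; exact ev_smul_vadd v p₀ t3 i
  obtain ⟨e00, e01, e02⟩ := e 0
  obtain ⟨e10, e11, e12⟩ := e 1
  rw [e00, e01, e02, e10, e11, e12]; ring

private lemma exists_smul_of_cross {u w : EuclideanSpace ℝ (Fin 2)} (hu : u ≠ 0)
    (h : u 0 * w 1 - u 1 * w 0 = 0) : ∃ t : ℝ, ∀ i, w i = t * u i := by
  have hD : u 0 ^ 2 + u 1 ^ 2 ≠ 0 := by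
    intro hD
    apply hu
    have h0 : u 0 = 0 := by nlinarith [sq_nonneg (u 0), sq_nonneg (u 1)]
    have h1 : u 1 = 0 := by nlinarith [sq_nonneg (u 0), sq_nonneg (u 1)]
    ext i; fin_cases i <;> simp [h0, h1]
  refine ⟨(w 0 * u 0 + w 1 * u 1) / (u 0 ^ 2 + u 1 ^ 2), fun i => ?_⟩
  fin_cases i
  · show w 0 = _ * u 0
    field_simp
    linear_combination (-(u 1)) * h
  · show w 1 = _ * u 1
    field_simp
    linear_combination (u 0) * h

private lemma eq_smul_vadd_of_coords {x v p : EuclideanSpace ℝ (Fin 2)} {t : ℝ}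
    (h : ∀ i, x i - p i = t * v i) : x = t • v +ᵥ p := by
  ext i
  have := h i
  simp [vadd_eq_add]
  linarith [h i]


private lemma coll4_s10 (p q r s : EuclideanSpace ℝ (Fin 2))
    (h1 : (q 0 - p 0) * (r 1 - p 1) - (q 1 - p 1) * (r 0 - p 0) = 0)
    (h2 : (q 0 - p 0) * (s 1 - p 1) - (q 1 - p 1) * (s 0 - p 0) = 0)
    (h3 : (r 0 - p 0) * (s 1 - p 1) - (r 1 - p 1) * (s 0 - p 0) = 0) :
    Collinear ℝ ({p, q, r, s} : Set (EuclideanSpace ℝ (Fin 2))) := by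
  rw [collinear_iff_exists_forall_eq_smul_vadd]
  have key : ∀ u w : EuclideanSpace ℝ (Fin 2), u ≠ 0 →
      ((u 0) * (w 1) - (u 1) * (w 0) = 0) → ∃ t : ℝ, ∀ i, w i = t * u i :=
    fun u w hu h => exists_smul_of_cross hu h
  rcases eq_or_ne q p with hq | hq
  · rcases eq_or_ne r p with hr | hr
    · -- v = s - p
      refine ⟨p, s - p, fun x hx => ?_⟩
      simp only [Set.mem_insert_iff, Set.mem_singleton_iff] at hx
      rcases hx with h | h | h | h <;> subst h
      · exact ⟨0, eq_smul_vadd_of_coords (fun i => by simp)⟩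
      · exact ⟨0, eq_smul_vadd_of_coords (fun i => by simp [hq])⟩
      · exact ⟨0, eq_smul_vadd_of_coords (fun i => by simp [hr])⟩
      · exact ⟨1, eq_smul_vadd_of_coords (fun i => by simp)⟩
    · -- v = r - p
      have hv : r - p ≠ 0 := sub_ne_zero.mpr hr
      obtain ⟨t, ht⟩ := key (r - p) (s - p) hv (by
        simp only [sub_coord]; linear_combination h3)
      refine ⟨p, r - p, fun x hx => ?_⟩
      simp only [Set.mem_insert_iff, Set.mem_singleton_iff] at hx
      rcases hx with h | h | h | h <;> subst h
      · exact ⟨0, eq_smul_vadd_of_coords (fun i => by simp)⟩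
      · exact ⟨0, eq_smul_vadd_of_coords (fun i => by simp [hq])⟩
      · exact ⟨1, eq_smul_vadd_of_coords (fun i => by simp)⟩
      · exact ⟨t, eq_smul_vadd_of_coords (fun i => by
          have := ht i; simp only [sub_coord] at this ⊢; linarith)⟩
  · -- v = q - p
    have hv : q - p ≠ 0 := sub_ne_zero.mpr hq
    obtain ⟨t1, ht1⟩ := key (q - p) (r - p) hv (by
      simp only [sub_coord]; linear_combination h1)
    obtain ⟨t2, ht2⟩ := key (q - p) (s - p) hv (by
      simp only [sub_coord]; linear_combination h2)
    refine ⟨p, q - p, fun x hx => ?_⟩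
    simp only [Set.mem_insert_iff, Set.mem_singleton_iff] at hx
    rcases hx with h | h | h | h <;> subst h
    · exact ⟨0, eq_smul_vadd_of_coords (fun i => by simp)⟩
    · exact ⟨1, eq_smul_vadd_of_coords (fun i => by simp)⟩
    · exact ⟨t1, eq_smul_vadd_of_coords (fun i => by
        have := ht1 i; simp only [sub_coord] at this ⊢; linarith)⟩
    · exact ⟨t2, eq_smul_vadd_of_coords (fun i => by
        have := ht2 i; simp only [sub_coord] at this ⊢; linarith)⟩

set_option maxHeartbeats 4000000 in
/-- Steiner's theorem on reflected points: if a point `P` lies on the circumcircle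
(centre `O`) of triangle `A B C`, then the three reflexions `P₁, P₂, P₃` of `P` in the
three edge-lines `BC`, `CA`, `AB` are collinear, and the line through them (the
Steiner line) passes through the orthocentre `H` of the triangle. -/
theorem stmt_10 (A B C O H P P₁ P₂ P₃ : EuclideanSpace ℝ (Fin 2))
    (htri : AffineIndependent ℝ ![A, B, C])
    (hO1 : dist O A = dist O B) (hO2 : dist O B = dist O C)
    (hH1 : ⟪H - A, B - C⟫ = 0) (hH2 : ⟪H - B, C - A⟫ = 0)
    (hP : dist O P = dist O A)
    (hP₁ : Collinear ℝ ({B, C, midpoint ℝ P P₁} : Set (EuclideanSpace ℝ (Fin 2))) ∧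
      ⟪P - P₁, C - B⟫ = 0)
    (hP₂ : Collinear ℝ ({C, A, midpoint ℝ P P₂} : Set (EuclideanSpace ℝ (Fin 2))) ∧
      ⟪P - P₂, A - C⟫ = 0)
    (hP₃ : Collinear ℝ ({A, B, midpoint ℝ P P₃} : Set (EuclideanSpace ℝ (Fin 2))) ∧
      ⟪P - P₃, B - A⟫ = 0) :
    Collinear ℝ ({P₁, P₂, P₃, H} : Set (EuclideanSpace ℝ (Fin 2))) := by
  classical
  obtain ⟨hc1, hq1⟩ := hP₁
  obtain ⟨hc2, hq2⟩ := hP₂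
  obtain ⟨hc3, hq3⟩ := hP₃
  -- distinctness of vertices
  have hinj : Function.Injective ![A, B, C] := htri.injective
  have hAB : A ≠ B := fun h => (by decide : ¬ ((0 : Fin 3) = 1)) (hinj (by simpa using h))
  have hBC : B ≠ C := fun h => (by decide : ¬ ((1 : Fin 3) = 2)) (hinj (by simpa using h))
  have hCA : C ≠ A := fun h => (by decide : ¬ ((2 : Fin 3) = 0)) (hinj (by simpa using h))
  have hD1 : (C 0 - B 0) ^ 2 + (C 1 - B 1) ^ 2 ≠ 0 := Dne hBC
  have hD2 : (A 0 - C 0) ^ 2 + (A 1 - C 1) ^ 2 ≠ 0 := Dne hCA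
  have hD3 : (B 0 - A 0) ^ 2 + (B 1 - A 1) ^ 2 ≠ 0 := Dne hAB
  -- nondegeneracy determinant
  have hnc : ¬ Collinear ℝ ({A, B, C} : Set (EuclideanSpace ℝ (Fin 2))) :=
    affineIndependent_iff_not_collinear_set.mp htri
  have hδ : (B 0 - A 0) * (C 1 - A 1) - (B 1 - A 1) * (C 0 - A 0) ≠ 0 := by
    intro h
    apply hnc
    have h3 : (C 0 - A 0) * (C 1 - A 1) - (C 1 - A 1) * (C 0 - A 0) = 0 := by ring
    have h4 := coll4_s10 A B C C h h h3
    exact h4.subset (by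
      intro x hx
      simp only [Set.mem_insert_iff, Set.mem_singleton_iff] at hx ⊢
      tauto)
  -- circle equations
  have hg1 : (O 0 - A 0) ^ 2 + (O 1 - A 1) ^ 2 = (O 0 - B 0) ^ 2 + (O 1 - B 1) ^ 2 := by
    have h2 : dist O A ^ 2 = dist O B ^ 2 := by rw [hO1]
    rwa [dist_sq, dist_sq] at h2
  have hg2 : (O 0 - B 0) ^ 2 + (O 1 - B 1) ^ 2 = (O 0 - C 0) ^ 2 + (O 1 - C 1) ^ 2 := by
    have h2 : dist O B ^ 2 = dist O C ^ 2 := by rw [hO2]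
    rwa [dist_sq, dist_sq] at h2
  have hg3 : (O 0 - P 0) ^ 2 + (O 1 - P 1) ^ 2 = (O 0 - A 0) ^ 2 + (O 1 - A 1) ^ 2 := by
    have h2 : dist O P ^ 2 = dist O A ^ 2 := by rw [hP]
    rwa [dist_sq, dist_sq] at h2
  -- orthocentre coordinates
  have he1 : (H 0 - A 0) * (B 0 - C 0) + (H 1 - A 1) * (B 1 - C 1) = 0 := by
    rw [inner_coords] at hH1
    simpa [sub_coord] using hH1
  have he2 : (H 0 - B 0) * (C 0 - A 0) + (H 1 - B 1) * (C 1 - A 1) = 0 := by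
    rw [inner_coords] at hH2
    simpa [sub_coord] using hH2
  have hw1 : (H 0 - (A 0 + B 0 + C 0 - 2 * O 0)) * (B 0 - C 0) +
      (H 1 - (A 1 + B 1 + C 1 - 2 * O 1)) * (B 1 - C 1) = 0 := by
    linear_combination he1 - hg2
  have hw2 : (H 0 - (A 0 + B 0 + C 0 - 2 * O 0)) * (C 0 - A 0) +
      (H 1 - (A 1 + B 1 + C 1 - 2 * O 1)) * (C 1 - A 1) = 0 := by
    linear_combination he2 + hg1 + hg2
  have h00 : ((B 0 - A 0) * (C 1 - A 1) - (B 1 - A 1) * (C 0 - A 0)) *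
      (H 0 - (A 0 + B 0 + C 0 - 2 * O 0)) = 0 := by
    linear_combination (C 1 - A 1) * hw1 - (B 1 - C 1) * hw2
  have h11 : ((B 0 - A 0) * (C 1 - A 1) - (B 1 - A 1) * (C 0 - A 0)) *
      (H 1 - (A 1 + B 1 + C 1 - 2 * O 1)) = 0 := by
    linear_combination (-(C 0 - A 0)) * hw1 + (B 0 - C 0) * hw2
  have hh0 : H 0 = A 0 + B 0 + C 0 - 2 * O 0 := by
    have := (mul_eq_zero.mp h00).resolve_left hδ
    linarith
  have hh1 : H 1 = A 1 + B 1 + C 1 - 2 * O 1 := by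
    have := (mul_eq_zero.mp h11).resolve_left hδ
    linarith
  -- reflection equations
  have hr1a : (C 0 - B 0) * ((P 1 + P₁ 1) / 2 - B 1) - (C 1 - B 1) * ((P 0 + P₁ 0) / 2 - B 0)
      = 0 := by
    have := cross_of_collinear hc1
    rwa [mid_coord, mid_coord] at this
  have hr1b : (P 0 - P₁ 0) * (C 0 - B 0) + (P 1 - P₁ 1) * (C 1 - B 1) = 0 := by
    rw [inner_coords] at hq1
    simpa [sub_coord] using hq1
  have hr2a : (A 0 - C 0) * ((P 1 + P₂ 1) / 2 - C 1) - (A 1 - C 1) * ((P 0 + P₂ 0) / 2 - C 0)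
      = 0 := by
    have := cross_of_collinear hc2
    rwa [mid_coord, mid_coord] at this
  have hr2b : (P 0 - P₂ 0) * (A 0 - C 0) + (P 1 - P₂ 1) * (A 1 - C 1) = 0 := by
    rw [inner_coords] at hq2
    simpa [sub_coord] using hq2
  have hr3a : (B 0 - A 0) * ((P 1 + P₃ 1) / 2 - A 1) - (B 1 - A 1) * ((P 0 + P₃ 0) / 2 - A 0)
      = 0 := by
    have := cross_of_collinear hc3
    rwa [mid_coord, mid_coord] at this
  have hr3b : (P 0 - P₃ 0) * (B 0 - A 0) + (P 1 - P₃ 1) * (B 1 - A 1) = 0 := by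
    rw [inner_coords] at hq3
    simpa [sub_coord] using hq3
  have hs1x : ((C 0 - B 0) ^ 2 + (C 1 - B 1) ^ 2) * P₁ 0 = B 0 ^ 2 * P 0 - 2 * B 0 * B 1 * C 1 + 2 * B 0 * B 1 * P 1 - 2 * B 0 * C 0 * P 0 + 2 * B 0 * C 1 ^ 2 - 2 * B 0 * C 1 * P 1 + 2 * B 1 ^ 2 * C 0 - B 1 ^ 2 * P 0 - 2 * B 1 * C 0 * C 1 - 2 * B 1 * C 0 * P 1 + 2 * B 1 * C 1 * P 0 + C 0 ^ 2 * P 0 + 2 * C 0 * C 1 * P 1 - C 1 ^ 2 * P 0 := by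
    linear_combination (-(C 0 - B 0)) * hr1b - (2 * (C 1 - B 1)) * hr1a
  have hs1y : ((C 0 - B 0) ^ 2 + (C 1 - B 1) ^ 2) * P₁ 1 = 2 * B 0 ^ 2 * C 1 - B 0 ^ 2 * P 1 - 2 * B 0 * B 1 * C 0 + 2 * B 0 * B 1 * P 0 - 2 * B 0 * C 0 * C 1 + 2 * B 0 * C 0 * P 1 - 2 * B 0 * C 1 * P 0 + B 1 ^ 2 * P 1 + 2 * B 1 * C 0 ^ 2 - 2 * B 1 * C 0 * P 0 - 2 * B 1 * C 1 * P 1 - C 0 ^ 2 * P 1 + 2 * C 0 * C 1 * P 0 + C 1 ^ 2 * P 1 := by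
    linear_combination (-(C 1 - B 1)) * hr1b + (2 * (C 0 - B 0)) * hr1a
  have hs2x : ((A 0 - C 0) ^ 2 + (A 1 - C 1) ^ 2) * P₂ 0 = A 0 ^ 2 * P 0 - 2 * A 0 * A 1 * C 1 + 2 * A 0 * A 1 * P 1 - 2 * A 0 * C 0 * P 0 + 2 * A 0 * C 1 ^ 2 - 2 * A 0 * C 1 * P 1 + 2 * A 1 ^ 2 * C 0 - A 1 ^ 2 * P 0 - 2 * A 1 * C 0 * C 1 - 2 * A 1 * C 0 * P 1 + 2 * A 1 * C 1 * P 0 + C 0 ^ 2 * P 0 + 2 * C 0 * C 1 * P 1 - C 1 ^ 2 * P 0 := by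
    linear_combination (-(A 0 - C 0)) * hr2b - (2 * (A 1 - C 1)) * hr2a
  have hs2y : ((A 0 - C 0) ^ 2 + (A 1 - C 1) ^ 2) * P₂ 1 = 2 * A 0 ^ 2 * C 1 - A 0 ^ 2 * P 1 - 2 * A 0 * A 1 * C 0 + 2 * A 0 * A 1 * P 0 - 2 * A 0 * C 0 * C 1 + 2 * A 0 * C 0 * P 1 - 2 * A 0 * C 1 * P 0 + A 1 ^ 2 * P 1 + 2 * A 1 * C 0 ^ 2 - 2 * A 1 * C 0 * P 0 - 2 * A 1 * C 1 * P 1 - C 0 ^ 2 * P 1 + 2 * C 0 * C 1 * P 0 + C 1 ^ 2 * P 1 := by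
    linear_combination (-(A 1 - C 1)) * hr2b + (2 * (A 0 - C 0)) * hr2a
  have hs3x : ((B 0 - A 0) ^ 2 + (B 1 - A 1) ^ 2) * P₃ 0 = A 0 ^ 2 * P 0 - 2 * A 0 * A 1 * B 1 + 2 * A 0 * A 1 * P 1 - 2 * A 0 * B 0 * P 0 + 2 * A 0 * B 1 ^ 2 - 2 * A 0 * B 1 * P 1 + 2 * A 1 ^ 2 * B 0 - A 1 ^ 2 * P 0 - 2 * A 1 * B 0 * B 1 - 2 * A 1 * B 0 * P 1 + 2 * A 1 * B 1 * P 0 + B 0 ^ 2 * P 0 + 2 * B 0 * B 1 * P 1 - B 1 ^ 2 * P 0 := by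
    linear_combination (-(B 0 - A 0)) * hr3b - (2 * (B 1 - A 1)) * hr3a
  have hs3y : ((B 0 - A 0) ^ 2 + (B 1 - A 1) ^ 2) * P₃ 1 = 2 * A 0 ^ 2 * B 1 - A 0 ^ 2 * P 1 - 2 * A 0 * A 1 * B 0 + 2 * A 0 * A 1 * P 0 - 2 * A 0 * B 0 * B 1 + 2 * A 0 * B 0 * P 1 - 2 * A 0 * B 1 * P 0 + A 1 ^ 2 * P 1 + 2 * A 1 * B 0 ^ 2 - 2 * A 1 * B 0 * P 0 - 2 * A 1 * B 1 * P 1 - B 0 ^ 2 * P 1 + 2 * B 0 * B 1 * P 0 + B 1 ^ 2 * P 1 := by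
    linear_combination (-(B 1 - A 1)) * hr3b + (2 * (B 0 - A 0)) * hr3a
  have k12 : ((C 0 - B 0) ^ 2 + (C 1 - B 1) ^ 2) * ((A 0 - C 0) ^ 2 + (A 1 - C 1) ^ 2) * ((P₁ 0 - H 0) * (P₂ 1 - H 1) - (P₁ 1 - H 1) * (P₂ 0 - H 0)) = 0 := by
    linear_combination (A 0 ^ 2 * B 0 ^ 2 * P₁ 1 - A 0 ^ 2 * B 0 ^ 2 * P₂ 1 - 2 * A 0 ^ 2 * B 0 * C 0 * P₁ 1 + 2 * A 0 ^ 2 * B 0 * C 0 * P₂ 1 + A 0 ^ 2 * B 1 ^ 2 * P₁ 1 - A 0 ^ 2 * B 1 ^ 2 * P₂ 1 - 2 * A 0 ^ 2 * B 1 * C 1 * P₁ 1 + 2 * A 0 ^ 2 * B 1 * C 1 * P₂ 1 + A 0 ^ 2 * C 0 ^ 2 * P₁ 1 - A 0 ^ 2 * C 0 ^ 2 * P₂ 1 + A 0 ^ 2 * C 1 ^ 2 * P₁ 1 - A 0 ^ 2 * C 1 ^ 2 * P₂ 1 - 2 * A 0 * B 0 ^ 2 * C 0 * P₁ 1 + 2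 * A 0 * B 0 ^ 2 * C 0 * P₂ 1 + 4 * A 0 * B 0 * C 0 ^ 2 * P₁ 1 - 4 * A 0 * B 0 * C 0 ^ 2 * P₂ 1 - 2 * A 0 * B 1 ^ 2 * C 0 * P₁ 1 + 2 * A 0 * B 1 ^ 2 * C 0 * P₂ 1 + 4 * A 0 * B 1 * C 0 * C 1 * P₁ 1 - 4 * A 0 * B 1 * C 0 * C 1 * P₂ 1 - 2 * A 0 * C 0 ^ 3 * P₁ 1 + 2 * A 0 * C 0 ^ 3 * P₂ 1 - 2 * A 0 * C 0 * C 1 ^ 2 * P₁ 1 + 2 * A 0 * C 0 * C 1 ^ 2 * P₂ 1 + A 1 ^ 2 * B 0 ^ 2 * P₁ 1 - A 1 ^ 2 * B 0 ^ 2 * P₂ 1 - 2 * A 1 ^ 2 * B 0 * C 0 * P₁ 1 + 2 * A 1 ^ 2 * B 0 * C 0 * P₂ 1 + A 1 ^ 2 * B 1 ^ 2 * P₁ 1 - A 1 ^ 2 * B 1 ^ 2 * P₂ 1 - 2 * A 1 ^ 2 * B 1 * C 1 * P₁ 1 + 2 * A 1 ^ 2 * B 1 * C 1 * P₂ 1 +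 A 1 ^ 2 * C 0 ^ 2 * P₁ 1 - A 1 ^ 2 * C 0 ^ 2 * P₂ 1 + A 1 ^ 2 * C 1 ^ 2 * P₁ 1 - A 1 ^ 2 * C 1 ^ 2 * P₂ 1 - 2 * A 1 * B 0 ^ 2 * C 1 * P₁ 1 + 2 * A 1 * B 0 ^ 2 * C 1 * P₂ 1 + 4 * A 1 * B 0 * C 0 * C 1 * P₁ 1 - 4 * A 1 * B 0 * C 0 * C 1 * P₂ 1 - 2 * A 1 * B 1 ^ 2 * C 1 * P₁ 1 + 2 * A 1 * B 1 ^ 2 * C 1 * P₂ 1 + 4 * A 1 * B 1 * C 1 ^ 2 * P₁ 1 - 4 * A 1 * B 1 * C 1 ^ 2 * P₂ 1 - 2 * A 1 * C 0 ^ 2 * C 1 * P₁ 1 + 2 * A 1 * C 0 ^ 2 * C 1 * P₂ 1 - 2 * A 1 * C 1 ^ 3 * P₁ 1 + 2 * A 1 * C 1 ^ 3 * P₂ 1 + B 0 ^ 2 * C 0 ^ 2 * P₁ 1 - B 0 ^ 2 * C 0 ^ 2 * P₂ 1 + B 0 ^ 2 * C 1 ^ 2 * P₁ 1 - B 0 ^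 2 * C 1 ^ 2 * P₂ 1 - 2 * B 0 * C 0 ^ 3 * P₁ 1 + 2 * B 0 * C 0 ^ 3 * P₂ 1 - 2 * B 0 * C 0 * C 1 ^ 2 * P₁ 1 + 2 * B 0 * C 0 * C 1 ^ 2 * P₂ 1 + B 1 ^ 2 * C 0 ^ 2 * P₁ 1 - B 1 ^ 2 * C 0 ^ 2 * P₂ 1 + B 1 ^ 2 * C 1 ^ 2 * P₁ 1 - B 1 ^ 2 * C 1 ^ 2 * P₂ 1 - 2 * B 1 * C 0 ^ 2 * C 1 * P₁ 1 + 2 * B 1 * C 0 ^ 2 * C 1 * P₂ 1 - 2 * B 1 * C 1 ^ 3 * P₁ 1 + 2 * B 1 * C 1 ^ 3 * P₂ 1 + C 0 ^ 4 * P₁ 1 - C 0 ^ 4 * P₂ 1 + 2 * C 0 ^ 2 * C 1 ^ 2 * P₁ 1 - 2 * C 0 ^ 2 * C 1 ^ 2 * P₂ 1 + C 1 ^ 4 * P₁ 1 - C 1 ^ 4 * P₂ 1) * hh0 + (-A 0 ^ 2 * B 0 ^ 2 * P₁ 0 + A 0 ^ 2 * B 0 ^ 2 * P₂ 0 + 2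 * A 0 ^ 2 * B 0 * C 0 * P₁ 0 - 2 * A 0 ^ 2 * B 0 * C 0 * P₂ 0 - A 0 ^ 2 * B 1 ^ 2 * P₁ 0 + A 0 ^ 2 * B 1 ^ 2 * P₂ 0 + 2 * A 0 ^ 2 * B 1 * C 1 * P₁ 0 - 2 * A 0 ^ 2 * B 1 * C 1 * P₂ 0 - A 0 ^ 2 * C 0 ^ 2 * P₁ 0 + A 0 ^ 2 * C 0 ^ 2 * P₂ 0 - A 0 ^ 2 * C 1 ^ 2 * P₁ 0 + A 0 ^ 2 * C 1 ^ 2 * P₂ 0 + 2 * A 0 * B 0 ^ 2 * C 0 * P₁ 0 - 2 * A 0 * B 0 ^ 2 * C 0 * P₂ 0 - 4 * A 0 * B 0 * C 0 ^ 2 * P₁ 0 + 4 * A 0 * B 0 * C 0 ^ 2 * P₂ 0 + 2 * A 0 * B 1 ^ 2 * C 0 * P₁ 0 - 2 * A 0 * B 1 ^ 2 * C 0 * P₂ 0 - 4 * A 0 * B 1 * C 0 * C 1 * P₁ 0 + 4 * A 0 * B 1 * C 0 * C 1 * P₂ 0 + 2 * A 0 * C 0 ^ 3 * P₁ 0 -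 2 * A 0 * C 0 ^ 3 * P₂ 0 + 2 * A 0 * C 0 * C 1 ^ 2 * P₁ 0 - 2 * A 0 * C 0 * C 1 ^ 2 * P₂ 0 - A 1 ^ 2 * B 0 ^ 2 * P₁ 0 + A 1 ^ 2 * B 0 ^ 2 * P₂ 0 + 2 * A 1 ^ 2 * B 0 * C 0 * P₁ 0 - 2 * A 1 ^ 2 * B 0 * C 0 * P₂ 0 - A 1 ^ 2 * B 1 ^ 2 * P₁ 0 + A 1 ^ 2 * B 1 ^ 2 * P₂ 0 + 2 * A 1 ^ 2 * B 1 * C 1 * P₁ 0 - 2 * A 1 ^ 2 * B 1 * C 1 * P₂ 0 - A 1 ^ 2 * C 0 ^ 2 * P₁ 0 + A 1 ^ 2 * C 0 ^ 2 * P₂ 0 - A 1 ^ 2 * C 1 ^ 2 * P₁ 0 + A 1 ^ 2 * C 1 ^ 2 * P₂ 0 + 2 * A 1 * B 0 ^ 2 * C 1 * P₁ 0 - 2 * A 1 * B 0 ^ 2 * C 1 * P₂ 0 - 4 * A 1 * B 0 * C 0 * C 1 * P₁ 0 + 4 * A 1 * B 0 * C 0 * C 1 * P₂ 0 + 2 *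 A 1 * B 1 ^ 2 * C 1 * P₁ 0 - 2 * A 1 * B 1 ^ 2 * C 1 * P₂ 0 - 4 * A 1 * B 1 * C 1 ^ 2 * P₁ 0 + 4 * A 1 * B 1 * C 1 ^ 2 * P₂ 0 + 2 * A 1 * C 0 ^ 2 * C 1 * P₁ 0 - 2 * A 1 * C 0 ^ 2 * C 1 * P₂ 0 + 2 * A 1 * C 1 ^ 3 * P₁ 0 - 2 * A 1 * C 1 ^ 3 * P₂ 0 - B 0 ^ 2 * C 0 ^ 2 * P₁ 0 + B 0 ^ 2 * C 0 ^ 2 * P₂ 0 - B 0 ^ 2 * C 1 ^ 2 * P₁ 0 + B 0 ^ 2 * C 1 ^ 2 * P₂ 0 + 2 * B 0 * C 0 ^ 3 * P₁ 0 - 2 * B 0 * C 0 ^ 3 * P₂ 0 + 2 * B 0 * C 0 * C 1 ^ 2 * P₁ 0 - 2 * B 0 * C 0 * C 1 ^ 2 * P₂ 0 - B 1 ^ 2 * C 0 ^ 2 * P₁ 0 + B 1 ^ 2 * C 0 ^ 2 * P₂ 0 - B 1 ^ 2 * C 1 ^ 2 * P₁ 0 + B 1 ^ 2 * C 1 ^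 2 * P₂ 0 + 2 * B 1 * C 0 ^ 2 * C 1 * P₁ 0 - 2 * B 1 * C 0 ^ 2 * C 1 * P₂ 0 + 2 * B 1 * C 1 ^ 3 * P₁ 0 - 2 * B 1 * C 1 ^ 3 * P₂ 0 - C 0 ^ 4 * P₁ 0 + C 0 ^ 4 * P₂ 0 - 2 * C 0 ^ 2 * C 1 ^ 2 * P₁ 0 + 2 * C 0 ^ 2 * C 1 ^ 2 * P₂ 0 - C 1 ^ 4 * P₁ 0 + C 1 ^ 4 * P₂ 0) * hh1 + (-A 0 ^ 2 * A 1 - A 0 ^ 2 * B 1 - A 0 ^ 2 * C 1 + 2 * A 0 ^ 2 * O 1 + A 0 ^ 2 * P₂ 1 + 2 * A 0 * A 1 * C 0 + 2 * A 0 * B 1 * C 0 + 2 * A 0 * C 0 * C 1 - 4 * A 0 * C 0 * O 1 - 2 * A 0 * C 0 * P₂ 1 - A 1 ^ 3 - A 1 ^ 2 * B 1 + A 1 ^ 2 * C 1 + 2 * A 1 ^ 2 * O 1 + A 1 ^ 2 * P₂ 1 + 2 * A 1 * B 1 * C 1 - A 1 * C 0 ^ 2 + A 1 * C 1 ^ 2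 - 4 * A 1 * C 1 * O 1 - 2 * A 1 * C 1 * P₂ 1 - B 1 * C 0 ^ 2 - B 1 * C 1 ^ 2 - C 0 ^ 2 * C 1 + 2 * C 0 ^ 2 * O 1 + C 0 ^ 2 * P₂ 1 - C 1 ^ 3 + 2 * C 1 ^ 2 * O 1 + C 1 ^ 2 * P₂ 1) * hs1x + (A 0 ^ 3 + A 0 ^ 2 * B 0 - A 0 ^ 2 * C 0 - 2 * A 0 ^ 2 * O 0 - A 0 ^ 2 * P₂ 0 + A 0 * A 1 ^ 2 - 2 * A 0 * A 1 * C 1 - 2 * A 0 * B 0 * C 0 - A 0 * C 0 ^ 2 + 4 * A 0 * C 0 * O 0 + 2 * A 0 * C 0 * P₂ 0 + A 0 * C 1 ^ 2 + A 1 ^ 2 * B 0 + A 1 ^ 2 * C 0 - 2 * A 1 ^ 2 * O 0 - A 1 ^ 2 * P₂ 0 - 2 * A 1 * B 0 * C 1 - 2 * A 1 * C 0 * C 1 + 4 * A 1 * C 1 * O 0 + 2 * A 1 * C 1 * P₂ 0 + B 0 * C 0 ^ 2 + B 0 * C 1 ^ 2 + C 0 ^ 3 - 2 * C 0 ^ 2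 * O 0 - C 0 ^ 2 * P₂ 0 + C 0 * C 1 ^ 2 - 2 * C 1 ^ 2 * O 0 - C 1 ^ 2 * P₂ 0) * hs1y + (A 1 * B 0 ^ 2 - 2 * A 1 * B 0 * C 0 + A 1 * B 1 ^ 2 - 2 * A 1 * B 1 * C 1 + A 1 * C 0 ^ 2 + A 1 * C 1 ^ 2 + B 0 ^ 2 * B 1 - B 0 ^ 2 * C 1 - 2 * B 0 ^ 2 * O 1 + B 0 ^ 2 * P 1 - 2 * B 0 * B 1 * P 0 + 4 * B 0 * C 0 * O 1 - 2 * B 0 * C 0 * P 1 + 2 * B 0 * C 1 * P 0 + B 1 ^ 3 - B 1 ^ 2 * C 1 - 2 * B 1 ^ 2 * O 1 - B 1 ^ 2 * P 1 - B 1 * C 0 ^ 2 + 2 * B 1 * C 0 * P 0 - B 1 * C 1 ^ 2 + 4 * B 1 * C 1 * O 1 + 2 * B 1 * C 1 * P 1 + C 0 ^ 2 * C 1 - 2 * C 0 ^ 2 * O 1 + C 0 ^ 2 * P 1 - 2 * C 0 * C 1 * P 0 + C 1 ^ 3 - 2 * C 1 ^ 2 * O 1 - C 1 ^ 2 * P 1)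 * hs2x + (-A 0 * B 0 ^ 2 + 2 * A 0 * B 0 * C 0 - A 0 * B 1 ^ 2 + 2 * A 0 * B 1 * C 1 - A 0 * C 0 ^ 2 - A 0 * C 1 ^ 2 - B 0 ^ 3 + B 0 ^ 2 * C 0 + 2 * B 0 ^ 2 * O 0 + B 0 ^ 2 * P 0 - B 0 * B 1 ^ 2 + 2 * B 0 * B 1 * P 1 + B 0 * C 0 ^ 2 - 4 * B 0 * C 0 * O 0 - 2 * B 0 * C 0 * P 0 + B 0 * C 1 ^ 2 - 2 * B 0 * C 1 * P 1 + B 1 ^ 2 * C 0 + 2 * B 1 ^ 2 * O 0 - B 1 ^ 2 * P 0 - 2 * B 1 * C 0 * P 1 - 4 * B 1 * C 1 * O 0 + 2 * B 1 * C 1 * P 0 - C 0 ^ 3 + 2 * C 0 ^ 2 * O 0 + C 0 ^ 2 * P 0 - C 0 * C 1 ^ 2 + 2 * C 0 * C 1 * P 1 + 2 * C 1 ^ 2 * O 0 - C 1 ^ 2 * P 0) * hs2y + (-2 * A 0 ^ 2 * B 0 * B 1 + 2 * A 0 ^ 2 * B 0 * C 1 + 2 * A 0 ^ 2 * B 1 *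 C 0 - 2 * A 0 ^ 2 * C 0 * C 1 + 2 * A 0 * A 1 * B 0 ^ 2 - 4 * A 0 * A 1 * B 0 * C 0 - 2 * A 0 * A 1 * B 1 ^ 2 + 4 * A 0 * A 1 * B 1 * C 1 + 2 * A 0 * A 1 * C 0 ^ 2 - 2 * A 0 * A 1 * C 1 ^ 2 - 2 * A 0 * B 0 ^ 2 * C 1 + 4 * A 0 * B 0 * B 1 * C 0 + 2 * A 0 * B 1 ^ 2 * C 1 - 4 * A 0 * B 1 * C 0 ^ 2 - 4 * A 0 * B 1 * C 1 ^ 2 + 2 * A 0 * C 0 ^ 2 * C 1 + 2 * A 0 * C 1 ^ 3 + 2 * A 1 ^ 2 * B 0 * B 1 - 2 * A 1 ^ 2 * B 0 * C 1 - 2 * A 1 ^ 2 * B 1 * C 0 + 2 * A 1 ^ 2 * C 0 * C 1 - 2 * A 1 * B 0 ^ 2 * C 0 - 4 * A 1 * B 0 * B 1 * C 1 + 4 * A 1 * B 0 * C 0 ^ 2 + 4 * A 1 * B 0 * C 1 ^ 2 + 2 * A 1 * B 1 ^ 2 * C 0 - 2 * A 1 * C 0 ^ 3 - 2 * A 1 *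 C 0 * C 1 ^ 2 + 2 * B 0 ^ 2 * C 0 * C 1 - 2 * B 0 * B 1 * C 0 ^ 2 + 2 * B 0 * B 1 * C 1 ^ 2 - 2 * B 0 * C 0 ^ 2 * C 1 - 2 * B 0 * C 1 ^ 3 - 2 * B 1 ^ 2 * C 0 * C 1 + 2 * B 1 * C 0 ^ 3 + 2 * B 1 * C 0 * C 1 ^ 2) * hg3 + (-2 * A 0 ^ 2 * B 0 * B 1 + 2 * A 0 ^ 2 * B 0 * C 1 + 2 * A 0 ^ 2 * B 1 * C 0 - 2 * A 0 ^ 2 * C 0 * C 1 + 2 * A 0 * A 1 * B 0 ^ 2 - 4 * A 0 * A 1 * B 0 * C 0 - 2 * A 0 * A 1 * B 1 ^ 2 + 4 * A 0 * A 1 * B 1 * C 1 + 2 * A 0 * A 1 * C 0 ^ 2 - 2 * A 0 * A 1 * C 1 ^ 2 - 2 * A 0 * B 0 ^ 2 * C 1 + 2 * A 0 * B 0 * B 1 * C 0 + 2 * A 0 * B 0 * B 1 * P 0 + 2 * A 0 * B 0 * C 0 * C 1 - 2 * A 0 * B 0 * C 1 * P 0 + 2 * A 0 * B 1 ^ 2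 * P 1 - 2 * A 0 * B 1 * C 0 ^ 2 - 2 * A 0 * B 1 * C 0 * P 0 - 4 * A 0 * B 1 * C 1 * P 1 + 2 * A 0 * C 0 * C 1 * P 0 + 2 * A 0 * C 1 ^ 2 * P 1 + 2 * A 1 ^ 2 * B 0 * B 1 - 2 * A 1 ^ 2 * B 0 * C 1 - 2 * A 1 ^ 2 * B 1 * C 0 + 2 * A 1 ^ 2 * C 0 * C 1 - 2 * A 1 * B 0 ^ 2 * P 0 - 2 * A 1 * B 0 * B 1 * C 1 - 2 * A 1 * B 0 * B 1 * P 1 + 4 * A 1 * B 0 * C 0 * P 0 + 2 * A 1 * B 0 * C 1 ^ 2 + 2 * A 1 * B 0 * C 1 * P 1 + 2 * A 1 * B 1 ^ 2 * C 0 - 2 * A 1 * B 1 * C 0 * C 1 + 2 * A 1 * B 1 * C 0 * P 1 - 2 * A 1 * C 0 ^ 2 * P 0 - 2 * A 1 * C 0 * C 1 * P 1 - 2 * B 0 ^ 3 * B 1 + 2 * B 0 ^ 3 * C 1 + 4 * B 0 ^ 2 * B 1 * O 0 + 2 * B 0 ^ 2 * B 1 * P 0 - 4 * B 0 ^ 2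 * C 1 * O 0 - 2 * B 0 * B 1 ^ 3 + 2 * B 0 * B 1 ^ 2 * C 1 + 4 * B 0 * B 1 ^ 2 * O 1 + 2 * B 0 * B 1 * C 0 ^ 2 - 4 * B 0 * B 1 * C 0 * O 0 - 2 * B 0 * B 1 * C 0 * P 0 + 2 * B 0 * B 1 * C 1 ^ 2 - 8 * B 0 * B 1 * C 1 * O 1 + 2 * B 0 * B 1 * C 1 * P 1 - 4 * B 0 * B 1 * O 0 * P 0 - 2 * B 0 * C 0 ^ 2 * C 1 + 4 * B 0 * C 0 * C 1 * O 0 - 2 * B 0 * C 0 * C 1 * P 0 - 2 * B 0 * C 1 ^ 3 + 4 * B 0 * C 1 ^ 2 * O 1 - 2 * B 0 * C 1 ^ 2 * P 1 + 4 * B 0 * C 1 * O 0 * P 0 + 2 * B 1 ^ 3 * P 0 - 2 * B 1 ^ 2 * C 0 * P 1 - 2 * B 1 ^ 2 * C 1 * P 0 - 4 * B 1 ^ 2 * O 1 * P 0 + 2 * B 1 * C 0 * C 1 * P 1 + 4 * B 1 * C 0 * O 0 * P 0 - 2 * B 1 * C 1 ^ 2 * P 0 + 8 * B 1 * C 1 *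 O 1 * P 0 + 2 * C 0 ^ 2 * C 1 * P 0 - 4 * C 0 * C 1 * O 0 * P 0 + 2 * C 1 ^ 3 * P 0 - 4 * C 1 ^ 2 * O 1 * P 0) * hg1 + (2 * A 0 * A 1 * B 0 ^ 2 - 2 * A 0 * A 1 * B 0 * C 0 - 2 * A 0 * A 1 * B 0 * P 0 - 2 * A 0 * A 1 * B 1 ^ 2 + 2 * A 0 * A 1 * B 1 * C 1 + 2 * A 0 * A 1 * B 1 * P 1 + 2 * A 0 * A 1 * C 0 * P 0 - 2 * A 0 * A 1 * C 1 * P 1 - 2 * A 0 * B 0 ^ 2 * C 1 + 2 * A 0 * B 0 * B 1 * C 0 - 4 * A 0 * B 0 * B 1 * O 0 + 2 * A 0 * B 0 * B 1 * P 0 + 4 * A 0 * B 0 * C 1 * O 0 + 2 * A 0 * B 1 ^ 2 * P 1 + 2 * A 0 * B 1 * C 0 ^ 2 - 6 * A 0 * B 1 * C 0 * P 0 + 2 * A 0 * B 1 * C 1 ^ 2 - 6 * A 0 * B 1 * C 1 * P 1 + 4 * A 0 * B 1 * O 0 * P 0 - 2 * A 0 * C 0 ^ 2 * C 1 + 4 *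 A 0 * C 0 * C 1 * P 0 - 2 * A 0 * C 1 ^ 3 + 4 * A 0 * C 1 ^ 2 * P 1 - 4 * A 0 * C 1 * O 0 * P 0 + 4 * A 1 ^ 2 * B 0 * B 1 - 2 * A 1 ^ 2 * B 0 * C 1 - 2 * A 1 ^ 2 * B 0 * P 1 - 2 * A 1 ^ 2 * B 1 * C 0 - 2 * A 1 ^ 2 * B 1 * P 0 + 2 * A 1 ^ 2 * C 0 * P 1 + 2 * A 1 ^ 2 * C 1 * P 0 - 2 * A 1 * B 0 ^ 2 * P 0 - 2 * A 1 * B 0 * B 1 * C 1 - 4 * A 1 * B 0 * B 1 * O 1 - 2 * A 1 * B 0 * B 1 * P 1 - 2 * A 1 * B 0 * C 0 ^ 2 + 6 * A 1 * B 0 * C 0 * P 0 - 2 * A 1 * B 0 * C 1 ^ 2 + 4 * A 1 * B 0 * C 1 * O 1 + 6 * A 1 * B 0 * C 1 * P 1 + 2 * A 1 * B 1 ^ 2 * C 0 + 4 * A 1 * B 1 * O 1 * P 0 + 2 * A 1 * C 0 ^ 3 - 4 * A 1 * C 0 ^ 2 * P 0 + 2 * A 1 * C 0 * C 1 ^ 2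 - 4 * A 1 * C 0 * C 1 * P 1 - 4 * A 1 * C 1 * O 1 * P 0 - 2 * B 0 ^ 3 * B 1 + 2 * B 0 ^ 3 * C 1 + 4 * B 0 ^ 2 * B 1 * O 0 + 2 * B 0 ^ 2 * B 1 * P 0 - 4 * B 0 ^ 2 * C 1 * O 0 - 2 * B 0 * B 1 ^ 3 + 2 * B 0 * B 1 ^ 2 * C 1 + 4 * B 0 * B 1 ^ 2 * O 1 - 2 * B 0 * B 1 * C 0 * P 0 - 4 * B 0 * B 1 * C 1 * O 1 + 2 * B 0 * B 1 * C 1 * P 1 - 4 * B 0 * B 1 * O 0 * P 0 + 2 * B 0 * C 0 ^ 2 * C 1 - 4 * B 0 * C 0 * C 1 * P 0 + 2 * B 0 * C 1 ^ 3 - 4 * B 0 * C 1 ^ 2 * P 1 + 4 * B 0 * C 1 * O 0 * P 0 + 2 * B 1 ^ 3 * P 0 - 2 * B 1 ^ 2 * C 0 * P 1 - 2 * B 1 ^ 2 * C 1 * P 0 - 4 * B 1 ^ 2 * O 1 * P 0 - 2 * B 1 * C 0 ^ 3 + 4 * B 1 * C 0 ^ 2 * P 0 - 2 * B 1 * C 0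 * C 1 ^ 2 + 4 * B 1 * C 0 * C 1 * P 1 + 4 * B 1 * C 1 * O 1 * P 0) * hg2
  have k13 : ((C 0 - B 0) ^ 2 + (C 1 - B 1) ^ 2) * ((B 0 - A 0) ^ 2 + (B 1 - A 1) ^ 2) * ((P₁ 0 - H 0) * (P₃ 1 - H 1) - (P₁ 1 - H 1) * (P₃ 0 - H 0)) = 0 := by
    linear_combination (A 0 ^ 2 * B 0 ^ 2 * P₁ 1 - A 0 ^ 2 * B 0 ^ 2 * P₃ 1 - 2 * A 0 ^ 2 * B 0 * C 0 * P₁ 1 + 2 * A 0 ^ 2 * B 0 * C 0 * P₃ 1 + A 0 ^ 2 * B 1 ^ 2 * P₁ 1 - A 0 ^ 2 * B 1 ^ 2 * P₃ 1 - 2 * A 0 ^ 2 * B 1 * C 1 * P₁ 1 + 2 * A 0 ^ 2 * B 1 * C 1 * P₃ 1 + A 0 ^ 2 * C 0 ^ 2 * P₁ 1 - A 0 ^ 2 * C 0 ^ 2 * P₃ 1 + A 0 ^ 2 * C 1 ^ 2 * P₁ 1 - A 0 ^ 2 * C 1 ^ 2 * P₃ 1 - 2 * A 0 * B 0 ^ 3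 * P₁ 1 + 2 * A 0 * B 0 ^ 3 * P₃ 1 + 4 * A 0 * B 0 ^ 2 * C 0 * P₁ 1 - 4 * A 0 * B 0 ^ 2 * C 0 * P₃ 1 - 2 * A 0 * B 0 * B 1 ^ 2 * P₁ 1 + 2 * A 0 * B 0 * B 1 ^ 2 * P₃ 1 + 4 * A 0 * B 0 * B 1 * C 1 * P₁ 1 - 4 * A 0 * B 0 * B 1 * C 1 * P₃ 1 - 2 * A 0 * B 0 * C 0 ^ 2 * P₁ 1 + 2 * A 0 * B 0 * C 0 ^ 2 * P₃ 1 - 2 * A 0 * B 0 * C 1 ^ 2 * P₁ 1 + 2 * A 0 * B 0 * C 1 ^ 2 * P₃ 1 + A 1 ^ 2 * B 0 ^ 2 * P₁ 1 - A 1 ^ 2 * B 0 ^ 2 * P₃ 1 - 2 * A 1 ^ 2 * B 0 * C 0 * P₁ 1 + 2 * A 1 ^ 2 * B 0 * C 0 * P₃ 1 + A 1 ^ 2 * B 1 ^ 2 * P₁ 1 - A 1 ^ 2 * B 1 ^ 2 * P₃ 1 - 2 * A 1 ^ 2 * B 1 * C 1 * P₁ 1 + 2 * A 1 ^ 2 *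 B 1 * C 1 * P₃ 1 + A 1 ^ 2 * C 0 ^ 2 * P₁ 1 - A 1 ^ 2 * C 0 ^ 2 * P₃ 1 + A 1 ^ 2 * C 1 ^ 2 * P₁ 1 - A 1 ^ 2 * C 1 ^ 2 * P₃ 1 - 2 * A 1 * B 0 ^ 2 * B 1 * P₁ 1 + 2 * A 1 * B 0 ^ 2 * B 1 * P₃ 1 + 4 * A 1 * B 0 * B 1 * C 0 * P₁ 1 - 4 * A 1 * B 0 * B 1 * C 0 * P₃ 1 - 2 * A 1 * B 1 ^ 3 * P₁ 1 + 2 * A 1 * B 1 ^ 3 * P₃ 1 + 4 * A 1 * B 1 ^ 2 * C 1 * P₁ 1 - 4 * A 1 * B 1 ^ 2 * C 1 * P₃ 1 - 2 * A 1 * B 1 * C 0 ^ 2 * P₁ 1 + 2 * A 1 * B 1 * C 0 ^ 2 * P₃ 1 - 2 * A 1 * B 1 * C 1 ^ 2 * P₁ 1 + 2 * A 1 * B 1 * C 1 ^ 2 * P₃ 1 + B 0 ^ 4 * P₁ 1 - B 0 ^ 4 * P₃ 1 - 2 * B 0 ^ 3 * C 0 * P₁ 1 + 2 * B 0 ^ 3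 * C 0 * P₃ 1 + 2 * B 0 ^ 2 * B 1 ^ 2 * P₁ 1 - 2 * B 0 ^ 2 * B 1 ^ 2 * P₃ 1 - 2 * B 0 ^ 2 * B 1 * C 1 * P₁ 1 + 2 * B 0 ^ 2 * B 1 * C 1 * P₃ 1 + B 0 ^ 2 * C 0 ^ 2 * P₁ 1 - B 0 ^ 2 * C 0 ^ 2 * P₃ 1 + B 0 ^ 2 * C 1 ^ 2 * P₁ 1 - B 0 ^ 2 * C 1 ^ 2 * P₃ 1 - 2 * B 0 * B 1 ^ 2 * C 0 * P₁ 1 + 2 * B 0 * B 1 ^ 2 * C 0 * P₃ 1 + B 1 ^ 4 * P₁ 1 - B 1 ^ 4 * P₃ 1 - 2 * B 1 ^ 3 * C 1 * P₁ 1 + 2 * B 1 ^ 3 * C 1 * P₃ 1 + B 1 ^ 2 * C 0 ^ 2 * P₁ 1 - B 1 ^ 2 * C 0 ^ 2 * P₃ 1 + B 1 ^ 2 * C 1 ^ 2 * P₁ 1 - B 1 ^ 2 * C 1 ^ 2 * P₃ 1) * hh0 + (-A 0 ^ 2 * B 0 ^ 2 * P₁ 0 + A 0 ^ 2 * B 0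 ^ 2 * P₃ 0 + 2 * A 0 ^ 2 * B 0 * C 0 * P₁ 0 - 2 * A 0 ^ 2 * B 0 * C 0 * P₃ 0 - A 0 ^ 2 * B 1 ^ 2 * P₁ 0 + A 0 ^ 2 * B 1 ^ 2 * P₃ 0 + 2 * A 0 ^ 2 * B 1 * C 1 * P₁ 0 - 2 * A 0 ^ 2 * B 1 * C 1 * P₃ 0 - A 0 ^ 2 * C 0 ^ 2 * P₁ 0 + A 0 ^ 2 * C 0 ^ 2 * P₃ 0 - A 0 ^ 2 * C 1 ^ 2 * P₁ 0 + A 0 ^ 2 * C 1 ^ 2 * P₃ 0 + 2 * A 0 * B 0 ^ 3 * P₁ 0 - 2 * A 0 * B 0 ^ 3 * P₃ 0 - 4 * A 0 * B 0 ^ 2 * C 0 * P₁ 0 + 4 * A 0 * B 0 ^ 2 * C 0 * P₃ 0 + 2 * A 0 * B 0 * B 1 ^ 2 * P₁ 0 - 2 * A 0 * B 0 * B 1 ^ 2 * P₃ 0 - 4 * A 0 * B 0 * B 1 * C 1 * P₁ 0 + 4 * A 0 * B 0 * B 1 * C 1 * P₃ 0 + 2 * A 0 * B 0 * C 0 ^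 2 * P₁ 0 - 2 * A 0 * B 0 * C 0 ^ 2 * P₃ 0 + 2 * A 0 * B 0 * C 1 ^ 2 * P₁ 0 - 2 * A 0 * B 0 * C 1 ^ 2 * P₃ 0 - A 1 ^ 2 * B 0 ^ 2 * P₁ 0 + A 1 ^ 2 * B 0 ^ 2 * P₃ 0 + 2 * A 1 ^ 2 * B 0 * C 0 * P₁ 0 - 2 * A 1 ^ 2 * B 0 * C 0 * P₃ 0 - A 1 ^ 2 * B 1 ^ 2 * P₁ 0 + A 1 ^ 2 * B 1 ^ 2 * P₃ 0 + 2 * A 1 ^ 2 * B 1 * C 1 * P₁ 0 - 2 * A 1 ^ 2 * B 1 * C 1 * P₃ 0 - A 1 ^ 2 * C 0 ^ 2 * P₁ 0 + A 1 ^ 2 * C 0 ^ 2 * P₃ 0 - A 1 ^ 2 * C 1 ^ 2 * P₁ 0 + A 1 ^ 2 * C 1 ^ 2 * P₃ 0 + 2 * A 1 * B 0 ^ 2 * B 1 * P₁ 0 - 2 * A 1 * B 0 ^ 2 * B 1 * P₃ 0 - 4 * A 1 * B 0 * B 1 * C 0 * P₁ 0 + 4 * A 1 * B 0 * B 1 *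 C 0 * P₃ 0 + 2 * A 1 * B 1 ^ 3 * P₁ 0 - 2 * A 1 * B 1 ^ 3 * P₃ 0 - 4 * A 1 * B 1 ^ 2 * C 1 * P₁ 0 + 4 * A 1 * B 1 ^ 2 * C 1 * P₃ 0 + 2 * A 1 * B 1 * C 0 ^ 2 * P₁ 0 - 2 * A 1 * B 1 * C 0 ^ 2 * P₃ 0 + 2 * A 1 * B 1 * C 1 ^ 2 * P₁ 0 - 2 * A 1 * B 1 * C 1 ^ 2 * P₃ 0 - B 0 ^ 4 * P₁ 0 + B 0 ^ 4 * P₃ 0 + 2 * B 0 ^ 3 * C 0 * P₁ 0 - 2 * B 0 ^ 3 * C 0 * P₃ 0 - 2 * B 0 ^ 2 * B 1 ^ 2 * P₁ 0 + 2 * B 0 ^ 2 * B 1 ^ 2 * P₃ 0 + 2 * B 0 ^ 2 * B 1 * C 1 * P₁ 0 - 2 * B 0 ^ 2 * B 1 * C 1 * P₃ 0 - B 0 ^ 2 * C 0 ^ 2 * P₁ 0 + B 0 ^ 2 * C 0 ^ 2 * P₃ 0 - B 0 ^ 2 * C 1 ^ 2 * P₁ 0 + B 0 ^ 2 * C 1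 ^ 2 * P₃ 0 + 2 * B 0 * B 1 ^ 2 * C 0 * P₁ 0 - 2 * B 0 * B 1 ^ 2 * C 0 * P₃ 0 - B 1 ^ 4 * P₁ 0 + B 1 ^ 4 * P₃ 0 + 2 * B 1 ^ 3 * C 1 * P₁ 0 - 2 * B 1 ^ 3 * C 1 * P₃ 0 - B 1 ^ 2 * C 0 ^ 2 * P₁ 0 + B 1 ^ 2 * C 0 ^ 2 * P₃ 0 - B 1 ^ 2 * C 1 ^ 2 * P₁ 0 + B 1 ^ 2 * C 1 ^ 2 * P₃ 0) * hh1 + (-A 0 ^ 2 * A 1 - A 0 ^ 2 * B 1 - A 0 ^ 2 * C 1 + 2 * A 0 ^ 2 * O 1 + A 0 ^ 2 * P₃ 1 + 2 * A 0 * A 1 * B 0 + 2 * A 0 * B 0 * B 1 + 2 * A 0 * B 0 * C 1 - 4 * A 0 * B 0 * O 1 - 2 * A 0 * B 0 * P₃ 1 - A 1 ^ 3 + A 1 ^ 2 * B 1 - A 1 ^ 2 * C 1 + 2 * A 1 ^ 2 * O 1 + A 1 ^ 2 * P₃ 1 - A 1 * B 0 ^ 2 + A 1 * B 1 ^ 2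 + 2 * A 1 * B 1 * C 1 - 4 * A 1 * B 1 * O 1 - 2 * A 1 * B 1 * P₃ 1 - B 0 ^ 2 * B 1 - B 0 ^ 2 * C 1 + 2 * B 0 ^ 2 * O 1 + B 0 ^ 2 * P₃ 1 - B 1 ^ 3 - B 1 ^ 2 * C 1 + 2 * B 1 ^ 2 * O 1 + B 1 ^ 2 * P₃ 1) * hs1x + (A 0 ^ 3 - A 0 ^ 2 * B 0 + A 0 ^ 2 * C 0 - 2 * A 0 ^ 2 * O 0 - A 0 ^ 2 * P₃ 0 + A 0 * A 1 ^ 2 - 2 * A 0 * A 1 * B 1 - A 0 * B 0 ^ 2 - 2 * A 0 * B 0 * C 0 + 4 * A 0 * B 0 * O 0 + 2 * A 0 * B 0 * P₃ 0 + A 0 * B 1 ^ 2 + A 1 ^ 2 * B 0 + A 1 ^ 2 * C 0 - 2 * A 1 ^ 2 * O 0 - A 1 ^ 2 * P₃ 0 - 2 * A 1 * B 0 * B 1 - 2 * A 1 * B 1 * C 0 + 4 * A 1 * B 1 * O 0 + 2 * A 1 * B 1 * P₃ 0 + B 0 ^ 3 + B 0 ^ 2 * C 0 - 2 * B 0 ^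 2 * O 0 - B 0 ^ 2 * P₃ 0 + B 0 * B 1 ^ 2 + B 1 ^ 2 * C 0 - 2 * B 1 ^ 2 * O 0 - B 1 ^ 2 * P₃ 0) * hs1y + (A 1 * B 0 ^ 2 - 2 * A 1 * B 0 * C 0 + A 1 * B 1 ^ 2 - 2 * A 1 * B 1 * C 1 + A 1 * C 0 ^ 2 + A 1 * C 1 ^ 2 + B 0 ^ 2 * B 1 - B 0 ^ 2 * C 1 - 2 * B 0 ^ 2 * O 1 + B 0 ^ 2 * P 1 - 2 * B 0 * B 1 * P 0 + 4 * B 0 * C 0 * O 1 - 2 * B 0 * C 0 * P 1 + 2 * B 0 * C 1 * P 0 + B 1 ^ 3 - B 1 ^ 2 * C 1 - 2 * B 1 ^ 2 * O 1 - B 1 ^ 2 * P 1 - B 1 * C 0 ^ 2 + 2 * B 1 * C 0 * P 0 - B 1 * C 1 ^ 2 + 4 * B 1 * C 1 * O 1 + 2 * B 1 * C 1 * P 1 + C 0 ^ 2 * C 1 - 2 * C 0 ^ 2 * O 1 + C 0 ^ 2 * P 1 - 2 * C 0 * C 1 * P 0 + C 1 ^ 3 - 2 * C 1 ^ 2 *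 O 1 - C 1 ^ 2 * P 1) * hs3x + (-A 0 * B 0 ^ 2 + 2 * A 0 * B 0 * C 0 - A 0 * B 1 ^ 2 + 2 * A 0 * B 1 * C 1 - A 0 * C 0 ^ 2 - A 0 * C 1 ^ 2 - B 0 ^ 3 + B 0 ^ 2 * C 0 + 2 * B 0 ^ 2 * O 0 + B 0 ^ 2 * P 0 - B 0 * B 1 ^ 2 + 2 * B 0 * B 1 * P 1 + B 0 * C 0 ^ 2 - 4 * B 0 * C 0 * O 0 - 2 * B 0 * C 0 * P 0 + B 0 * C 1 ^ 2 - 2 * B 0 * C 1 * P 1 + B 1 ^ 2 * C 0 + 2 * B 1 ^ 2 * O 0 - B 1 ^ 2 * P 0 - 2 * B 1 * C 0 * P 1 - 4 * B 1 * C 1 * O 0 + 2 * B 1 * C 1 * P 0 - C 0 ^ 3 + 2 * C 0 ^ 2 * O 0 + C 0 ^ 2 * P 0 - C 0 * C 1 ^ 2 + 2 * C 0 * C 1 * P 1 + 2 * C 1 ^ 2 * O 0 - C 1 ^ 2 * P 0) * hs3y + (-2 * A 0 ^ 2 * B 0 * B 1 + 2 * A 0 ^ 2 * B 0 * C 1 +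 2 * A 0 ^ 2 * B 1 * C 0 - 2 * A 0 ^ 2 * C 0 * C 1 + 2 * A 0 * A 1 * B 0 ^ 2 - 4 * A 0 * A 1 * B 0 * C 0 - 2 * A 0 * A 1 * B 1 ^ 2 + 4 * A 0 * A 1 * B 1 * C 1 + 2 * A 0 * A 1 * C 0 ^ 2 - 2 * A 0 * A 1 * C 1 ^ 2 + 2 * A 0 * B 0 ^ 2 * B 1 - 4 * A 0 * B 0 ^ 2 * C 1 + 4 * A 0 * B 0 * C 0 * C 1 + 2 * A 0 * B 1 ^ 3 - 4 * A 0 * B 1 ^ 2 * C 1 - 2 * A 0 * B 1 * C 0 ^ 2 + 2 * A 0 * B 1 * C 1 ^ 2 + 2 * A 1 ^ 2 * B 0 * B 1 - 2 * A 1 ^ 2 * B 0 * C 1 - 2 * A 1 ^ 2 * B 1 * C 0 + 2 * A 1 ^ 2 * C 0 * C 1 - 2 * A 1 * B 0 ^ 3 + 4 * A 1 * B 0 ^ 2 * C 0 - 2 * A 1 * B 0 * B 1 ^ 2 - 2 * A 1 * B 0 * C 0 ^ 2 + 2 * A 1 * B 0 * C 1 ^ 2 + 4 * A 1 * B 1 ^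 2 * C 0 - 4 * A 1 * B 1 * C 0 * C 1 + 2 * B 0 ^ 3 * C 1 - 2 * B 0 ^ 2 * B 1 * C 0 - 2 * B 0 ^ 2 * C 0 * C 1 + 2 * B 0 * B 1 ^ 2 * C 1 + 2 * B 0 * B 1 * C 0 ^ 2 - 2 * B 0 * B 1 * C 1 ^ 2 - 2 * B 1 ^ 3 * C 0 + 2 * B 1 ^ 2 * C 0 * C 1) * hg3 + (-2 * A 0 ^ 2 * B 0 * B 1 + 2 * A 0 ^ 2 * B 0 * C 1 + 2 * A 0 ^ 2 * B 1 * C 0 - 2 * A 0 ^ 2 * C 0 * C 1 + 2 * A 0 * A 1 * B 0 ^ 2 - 4 * A 0 * A 1 * B 0 * C 0 - 2 * A 0 * A 1 * B 1 ^ 2 + 4 * A 0 * A 1 * B 1 * C 1 + 2 * A 0 * A 1 * C 0 ^ 2 - 2 * A 0 * A 1 * C 1 ^ 2 - 2 * A 0 * B 0 ^ 2 * C 1 + 2 * A 0 * B 0 * B 1 * C 0 + 2 * A 0 * B 0 * B 1 * P 0 + 2 * A 0 * B 0 * C 0 * C 1 - 2 * A 0 * B 0 * C 1 * P 0 + 2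 * A 0 * B 1 ^ 2 * P 1 - 2 * A 0 * B 1 * C 0 ^ 2 - 2 * A 0 * B 1 * C 0 * P 0 - 4 * A 0 * B 1 * C 1 * P 1 + 2 * A 0 * C 0 * C 1 * P 0 + 2 * A 0 * C 1 ^ 2 * P 1 + 2 * A 1 ^ 2 * B 0 * B 1 - 2 * A 1 ^ 2 * B 0 * C 1 - 2 * A 1 ^ 2 * B 1 * C 0 + 2 * A 1 ^ 2 * C 0 * C 1 - 2 * A 1 * B 0 ^ 2 * P 0 - 2 * A 1 * B 0 * B 1 * C 1 - 2 * A 1 * B 0 * B 1 * P 1 + 4 * A 1 * B 0 * C 0 * P 0 + 2 * A 1 * B 0 * C 1 ^ 2 + 2 * A 1 * B 0 * C 1 * P 1 + 2 * A 1 * B 1 ^ 2 * C 0 - 2 * A 1 * B 1 * C 0 * C 1 + 2 * A 1 * B 1 * C 0 * P 1 - 2 * A 1 * C 0 ^ 2 * P 0 - 2 * A 1 * C 0 * C 1 * P 1 - 2 * B 0 ^ 3 * B 1 + 2 * B 0 ^ 3 * C 1 + 4 * B 0 ^ 2 * B 1 * O 0 + 2 * B 0 ^ 2 * B 1 * P 0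 - 4 * B 0 ^ 2 * C 1 * O 0 - 2 * B 0 * B 1 ^ 3 + 2 * B 0 * B 1 ^ 2 * C 1 + 4 * B 0 * B 1 ^ 2 * O 1 + 2 * B 0 * B 1 * C 0 ^ 2 - 4 * B 0 * B 1 * C 0 * O 0 - 2 * B 0 * B 1 * C 0 * P 0 + 2 * B 0 * B 1 * C 1 ^ 2 - 8 * B 0 * B 1 * C 1 * O 1 + 2 * B 0 * B 1 * C 1 * P 1 - 4 * B 0 * B 1 * O 0 * P 0 - 2 * B 0 * C 0 ^ 2 * C 1 + 4 * B 0 * C 0 * C 1 * O 0 - 2 * B 0 * C 0 * C 1 * P 0 - 2 * B 0 * C 1 ^ 3 + 4 * B 0 * C 1 ^ 2 * O 1 - 2 * B 0 * C 1 ^ 2 * P 1 + 4 * B 0 * C 1 * O 0 * P 0 + 2 * B 1 ^ 3 * P 0 - 2 * B 1 ^ 2 * C 0 * P 1 - 2 * B 1 ^ 2 * C 1 * P 0 - 4 * B 1 ^ 2 * O 1 * P 0 + 2 * B 1 * C 0 * C 1 * P 1 + 4 * B 1 * C 0 * O 0 * P 0 - 2 * B 1 * C 1 ^ 2 * P 0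 + 8 * B 1 * C 1 * O 1 * P 0 + 2 * C 0 ^ 2 * C 1 * P 0 - 4 * C 0 * C 1 * O 0 * P 0 + 2 * C 1 ^ 3 * P 0 - 4 * C 1 ^ 2 * O 1 * P 0) * hg1 + (2 * A 0 * A 1 * B 0 ^ 2 - 2 * A 0 * A 1 * B 0 * C 0 - 2 * A 0 * A 1 * B 0 * P 0 - 2 * A 0 * A 1 * B 1 ^ 2 + 2 * A 0 * A 1 * B 1 * C 1 + 2 * A 0 * A 1 * B 1 * P 1 + 2 * A 0 * A 1 * C 0 * P 0 - 2 * A 0 * A 1 * C 1 * P 1 + 2 * A 0 * B 0 ^ 2 * B 1 - 4 * A 0 * B 0 ^ 2 * C 1 + 2 * A 0 * B 0 * B 1 * C 0 - 4 * A 0 * B 0 * B 1 * O 0 - 2 * A 0 * B 0 * B 1 * P 0 + 4 * A 0 * B 0 * C 1 * O 0 + 4 * A 0 * B 0 * C 1 * P 0 + 2 * A 0 * B 1 ^ 3 - 2 * A 0 * B 1 ^ 2 * C 1 - 2 * A 0 * B 1 ^ 2 * P 1 - 2 * A 0 * B 1 * C 0 * P 0 + 2 * A 0 * B 1 * C 1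 * P 1 + 4 * A 0 * B 1 * O 0 * P 0 - 4 * A 0 * C 1 * O 0 * P 0 + 4 * A 1 ^ 2 * B 0 * B 1 - 2 * A 1 ^ 2 * B 0 * C 1 - 2 * A 1 ^ 2 * B 0 * P 1 - 2 * A 1 ^ 2 * B 1 * C 0 - 2 * A 1 ^ 2 * B 1 * P 0 + 2 * A 1 ^ 2 * C 0 * P 1 + 2 * A 1 ^ 2 * C 1 * P 0 - 2 * A 1 * B 0 ^ 3 + 2 * A 1 * B 0 ^ 2 * C 0 + 2 * A 1 * B 0 ^ 2 * P 0 - 2 * A 1 * B 0 * B 1 ^ 2 - 2 * A 1 * B 0 * B 1 * C 1 - 4 * A 1 * B 0 * B 1 * O 1 + 2 * A 1 * B 0 * B 1 * P 1 - 2 * A 1 * B 0 * C 0 * P 0 + 4 * A 1 * B 0 * C 1 * O 1 + 2 * A 1 * B 0 * C 1 * P 1 + 4 * A 1 * B 1 ^ 2 * C 0 - 4 * A 1 * B 1 * C 0 * P 1 + 4 * A 1 * B 1 * O 1 * P 0 - 4 * A 1 * C 1 * O 1 * P 0 - 2 * B 0 ^ 3 * B 1 + 4 * B 0 ^ 3 *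 C 1 - 2 * B 0 ^ 2 * B 1 * C 0 + 4 * B 0 ^ 2 * B 1 * O 0 + 2 * B 0 ^ 2 * B 1 * P 0 - 4 * B 0 ^ 2 * C 1 * O 0 - 4 * B 0 ^ 2 * C 1 * P 0 - 2 * B 0 * B 1 ^ 3 + 4 * B 0 * B 1 ^ 2 * C 1 + 4 * B 0 * B 1 ^ 2 * O 1 + 2 * B 0 * B 1 * C 0 * P 0 - 4 * B 0 * B 1 * C 1 * O 1 - 2 * B 0 * B 1 * C 1 * P 1 - 4 * B 0 * B 1 * O 0 * P 0 + 4 * B 0 * C 1 * O 0 * P 0 - 2 * B 1 ^ 3 * C 0 + 2 * B 1 ^ 3 * P 0 + 2 * B 1 ^ 2 * C 0 * P 1 - 2 * B 1 ^ 2 * C 1 * P 0 - 4 * B 1 ^ 2 * O 1 * P 0 + 4 * B 1 * C 1 * O 1 * P 0) * hg2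
  have k23 : ((A 0 - C 0) ^ 2 + (A 1 - C 1) ^ 2) * ((B 0 - A 0) ^ 2 + (B 1 - A 1) ^ 2) * ((P₂ 0 - H 0) * (P₃ 1 - H 1) - (P₂ 1 - H 1) * (P₃ 0 - H 0)) = 0 := by
    linear_combination (A 0 ^ 4 * P₂ 1 - A 0 ^ 4 * P₃ 1 - 2 * A 0 ^ 3 * B 0 * P₂ 1 + 2 * A 0 ^ 3 * B 0 * P₃ 1 - 2 * A 0 ^ 3 * C 0 * P₂ 1 + 2 * A 0 ^ 3 * C 0 * P₃ 1 + 2 * A 0 ^ 2 * A 1 ^ 2 * P₂ 1 - 2 * A 0 ^ 2 * A 1 ^ 2 * P₃ 1 - 2 * A 0 ^ 2 * A 1 * B 1 * P₂ 1 + 2 * A 0 ^ 2 * A 1 * B 1 * P₃ 1 - 2 * A 0 ^ 2 * A 1 * C 1 * P₂ 1 + 2 * A 0 ^ 2 * A 1 * C 1 * P₃ 1 + A 0 ^ 2 * B 0 ^ 2 * P₂ 1 - A 0 ^ 2 * B 0 ^ 2 * P₃ 1 + 4 * A 0 ^ 2 * B 0 * C 0 * P₂ 1 - 4 * A 0 ^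 2 * B 0 * C 0 * P₃ 1 + A 0 ^ 2 * B 1 ^ 2 * P₂ 1 - A 0 ^ 2 * B 1 ^ 2 * P₃ 1 + A 0 ^ 2 * C 0 ^ 2 * P₂ 1 - A 0 ^ 2 * C 0 ^ 2 * P₃ 1 + A 0 ^ 2 * C 1 ^ 2 * P₂ 1 - A 0 ^ 2 * C 1 ^ 2 * P₃ 1 - 2 * A 0 * A 1 ^ 2 * B 0 * P₂ 1 + 2 * A 0 * A 1 ^ 2 * B 0 * P₃ 1 - 2 * A 0 * A 1 ^ 2 * C 0 * P₂ 1 + 2 * A 0 * A 1 ^ 2 * C 0 * P₃ 1 + 4 * A 0 * A 1 * B 0 * C 1 * P₂ 1 - 4 * A 0 * A 1 * B 0 * C 1 * P₃ 1 + 4 * A 0 * A 1 * B 1 * C 0 * P₂ 1 - 4 * A 0 * A 1 * B 1 * C 0 * P₃ 1 - 2 * A 0 * B 0 ^ 2 * C 0 * P₂ 1 + 2 * A 0 * B 0 ^ 2 * C 0 * P₃ 1 - 2 * A 0 * B 0 * C 0 ^ 2 * P₂ 1 + 2 * A 0 * B 0 * C 0 ^ 2 * P₃ 1 - 2 * A 0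 * B 0 * C 1 ^ 2 * P₂ 1 + 2 * A 0 * B 0 * C 1 ^ 2 * P₃ 1 - 2 * A 0 * B 1 ^ 2 * C 0 * P₂ 1 + 2 * A 0 * B 1 ^ 2 * C 0 * P₃ 1 + A 1 ^ 4 * P₂ 1 - A 1 ^ 4 * P₃ 1 - 2 * A 1 ^ 3 * B 1 * P₂ 1 + 2 * A 1 ^ 3 * B 1 * P₃ 1 - 2 * A 1 ^ 3 * C 1 * P₂ 1 + 2 * A 1 ^ 3 * C 1 * P₃ 1 + A 1 ^ 2 * B 0 ^ 2 * P₂ 1 - A 1 ^ 2 * B 0 ^ 2 * P₃ 1 + A 1 ^ 2 * B 1 ^ 2 * P₂ 1 - A 1 ^ 2 * B 1 ^ 2 * P₃ 1 + 4 * A 1 ^ 2 * B 1 * C 1 * P₂ 1 - 4 * A 1 ^ 2 * B 1 * C 1 * P₃ 1 + A 1 ^ 2 * C 0 ^ 2 * P₂ 1 - A 1 ^ 2 * C 0 ^ 2 * P₃ 1 + A 1 ^ 2 * C 1 ^ 2 * P₂ 1 - A 1 ^ 2 * C 1 ^ 2 * P₃ 1 - 2 * A 1 * B 0 ^ 2 *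 C 1 * P₂ 1 + 2 * A 1 * B 0 ^ 2 * C 1 * P₃ 1 - 2 * A 1 * B 1 ^ 2 * C 1 * P₂ 1 + 2 * A 1 * B 1 ^ 2 * C 1 * P₃ 1 - 2 * A 1 * B 1 * C 0 ^ 2 * P₂ 1 + 2 * A 1 * B 1 * C 0 ^ 2 * P₃ 1 - 2 * A 1 * B 1 * C 1 ^ 2 * P₂ 1 + 2 * A 1 * B 1 * C 1 ^ 2 * P₃ 1 + B 0 ^ 2 * C 0 ^ 2 * P₂ 1 - B 0 ^ 2 * C 0 ^ 2 * P₃ 1 + B 0 ^ 2 * C 1 ^ 2 * P₂ 1 - B 0 ^ 2 * C 1 ^ 2 * P₃ 1 + B 1 ^ 2 * C 0 ^ 2 * P₂ 1 - B 1 ^ 2 * C 0 ^ 2 * P₃ 1 + B 1 ^ 2 * C 1 ^ 2 * P₂ 1 - B 1 ^ 2 * C 1 ^ 2 * P₃ 1) * hh0 + (-A 0 ^ 4 * P₂ 0 + A 0 ^ 4 * P₃ 0 + 2 * A 0 ^ 3 * B 0 * P₂ 0 - 2 * A 0 ^ 3 * B 0 * P₃ 0 + 2 * A 0 ^ 3 *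 C 0 * P₂ 0 - 2 * A 0 ^ 3 * C 0 * P₃ 0 - 2 * A 0 ^ 2 * A 1 ^ 2 * P₂ 0 + 2 * A 0 ^ 2 * A 1 ^ 2 * P₃ 0 + 2 * A 0 ^ 2 * A 1 * B 1 * P₂ 0 - 2 * A 0 ^ 2 * A 1 * B 1 * P₃ 0 + 2 * A 0 ^ 2 * A 1 * C 1 * P₂ 0 - 2 * A 0 ^ 2 * A 1 * C 1 * P₃ 0 - A 0 ^ 2 * B 0 ^ 2 * P₂ 0 + A 0 ^ 2 * B 0 ^ 2 * P₃ 0 - 4 * A 0 ^ 2 * B 0 * C 0 * P₂ 0 + 4 * A 0 ^ 2 * B 0 * C 0 * P₃ 0 - A 0 ^ 2 * B 1 ^ 2 * P₂ 0 + A 0 ^ 2 * B 1 ^ 2 * P₃ 0 - A 0 ^ 2 * C 0 ^ 2 * P₂ 0 + A 0 ^ 2 * C 0 ^ 2 * P₃ 0 - A 0 ^ 2 * C 1 ^ 2 * P₂ 0 + A 0 ^ 2 * C 1 ^ 2 * P₃ 0 + 2 * A 0 * A 1 ^ 2 * B 0 * P₂ 0 - 2 * A 0 * A 1 ^ 2 *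 B 0 * P₃ 0 + 2 * A 0 * A 1 ^ 2 * C 0 * P₂ 0 - 2 * A 0 * A 1 ^ 2 * C 0 * P₃ 0 - 4 * A 0 * A 1 * B 0 * C 1 * P₂ 0 + 4 * A 0 * A 1 * B 0 * C 1 * P₃ 0 - 4 * A 0 * A 1 * B 1 * C 0 * P₂ 0 + 4 * A 0 * A 1 * B 1 * C 0 * P₃ 0 + 2 * A 0 * B 0 ^ 2 * C 0 * P₂ 0 - 2 * A 0 * B 0 ^ 2 * C 0 * P₃ 0 + 2 * A 0 * B 0 * C 0 ^ 2 * P₂ 0 - 2 * A 0 * B 0 * C 0 ^ 2 * P₃ 0 + 2 * A 0 * B 0 * C 1 ^ 2 * P₂ 0 - 2 * A 0 * B 0 * C 1 ^ 2 * P₃ 0 + 2 * A 0 * B 1 ^ 2 * C 0 * P₂ 0 - 2 * A 0 * B 1 ^ 2 * C 0 * P₃ 0 - A 1 ^ 4 * P₂ 0 + A 1 ^ 4 * P₃ 0 + 2 * A 1 ^ 3 * B 1 * P₂ 0 - 2 * A 1 ^ 3 * B 1 * P₃ 0 + 2 * A 1 ^ 3 * C 1 * P₂ 0 - 2 * A 1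 ^ 3 * C 1 * P₃ 0 - A 1 ^ 2 * B 0 ^ 2 * P₂ 0 + A 1 ^ 2 * B 0 ^ 2 * P₃ 0 - A 1 ^ 2 * B 1 ^ 2 * P₂ 0 + A 1 ^ 2 * B 1 ^ 2 * P₃ 0 - 4 * A 1 ^ 2 * B 1 * C 1 * P₂ 0 + 4 * A 1 ^ 2 * B 1 * C 1 * P₃ 0 - A 1 ^ 2 * C 0 ^ 2 * P₂ 0 + A 1 ^ 2 * C 0 ^ 2 * P₃ 0 - A 1 ^ 2 * C 1 ^ 2 * P₂ 0 + A 1 ^ 2 * C 1 ^ 2 * P₃ 0 + 2 * A 1 * B 0 ^ 2 * C 1 * P₂ 0 - 2 * A 1 * B 0 ^ 2 * C 1 * P₃ 0 + 2 * A 1 * B 1 ^ 2 * C 1 * P₂ 0 - 2 * A 1 * B 1 ^ 2 * C 1 * P₃ 0 + 2 * A 1 * B 1 * C 0 ^ 2 * P₂ 0 - 2 * A 1 * B 1 * C 0 ^ 2 * P₃ 0 + 2 * A 1 * B 1 * C 1 ^ 2 * P₂ 0 - 2 * A 1 * B 1 * C 1 ^ 2 * P₃ 0 - B 0 ^ 2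 * C 0 ^ 2 * P₂ 0 + B 0 ^ 2 * C 0 ^ 2 * P₃ 0 - B 0 ^ 2 * C 1 ^ 2 * P₂ 0 + B 0 ^ 2 * C 1 ^ 2 * P₃ 0 - B 1 ^ 2 * C 0 ^ 2 * P₂ 0 + B 1 ^ 2 * C 0 ^ 2 * P₃ 0 - B 1 ^ 2 * C 1 ^ 2 * P₂ 0 + B 1 ^ 2 * C 1 ^ 2 * P₃ 0) * hh1 + (-A 0 ^ 2 * A 1 - A 0 ^ 2 * B 1 - A 0 ^ 2 * C 1 + 2 * A 0 ^ 2 * O 1 + A 0 ^ 2 * P₃ 1 + 2 * A 0 * A 1 * B 0 + 2 * A 0 * B 0 * B 1 + 2 * A 0 * B 0 * C 1 - 4 * A 0 * B 0 * O 1 - 2 * A 0 * B 0 * P₃ 1 - A 1 ^ 3 + A 1 ^ 2 * B 1 - A 1 ^ 2 * C 1 + 2 * A 1 ^ 2 * O 1 + A 1 ^ 2 * P₃ 1 - A 1 * B 0 ^ 2 + A 1 * B 1 ^ 2 + 2 * A 1 * B 1 * C 1 - 4 * A 1 * B 1 * O 1 - 2 * A 1 * B 1 * P₃ 1 - B 0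 ^ 2 * B 1 - B 0 ^ 2 * C 1 + 2 * B 0 ^ 2 * O 1 + B 0 ^ 2 * P₃ 1 - B 1 ^ 3 - B 1 ^ 2 * C 1 + 2 * B 1 ^ 2 * O 1 + B 1 ^ 2 * P₃ 1) * hs2x + (A 0 ^ 3 - A 0 ^ 2 * B 0 + A 0 ^ 2 * C 0 - 2 * A 0 ^ 2 * O 0 - A 0 ^ 2 * P₃ 0 + A 0 * A 1 ^ 2 - 2 * A 0 * A 1 * B 1 - A 0 * B 0 ^ 2 - 2 * A 0 * B 0 * C 0 + 4 * A 0 * B 0 * O 0 + 2 * A 0 * B 0 * P₃ 0 + A 0 * B 1 ^ 2 + A 1 ^ 2 * B 0 + A 1 ^ 2 * C 0 - 2 * A 1 ^ 2 * O 0 - A 1 ^ 2 * P₃ 0 - 2 * A 1 * B 0 * B 1 - 2 * A 1 * B 1 * C 0 + 4 * A 1 * B 1 * O 0 + 2 * A 1 * B 1 * P₃ 0 + B 0 ^ 3 + B 0 ^ 2 * C 0 - 2 * B 0 ^ 2 * O 0 - B 0 ^ 2 * P₃ 0 + B 0 * B 1 ^ 2 + B 1 ^ 2 * C 0 - 2 *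 B 1 ^ 2 * O 0 - B 1 ^ 2 * P₃ 0) * hs2y + (A 0 ^ 2 * A 1 + A 0 ^ 2 * B 1 - A 0 ^ 2 * C 1 - 2 * A 0 ^ 2 * O 1 + A 0 ^ 2 * P 1 - 2 * A 0 * A 1 * P 0 - 2 * A 0 * B 1 * C 0 + 4 * A 0 * C 0 * O 1 - 2 * A 0 * C 0 * P 1 + 2 * A 0 * C 1 * P 0 + A 1 ^ 3 + A 1 ^ 2 * B 1 - A 1 ^ 2 * C 1 - 2 * A 1 ^ 2 * O 1 - A 1 ^ 2 * P 1 - 2 * A 1 * B 1 * C 1 - A 1 * C 0 ^ 2 + 2 * A 1 * C 0 * P 0 - A 1 * C 1 ^ 2 + 4 * A 1 * C 1 * O 1 + 2 * A 1 * C 1 * P 1 + B 1 * C 0 ^ 2 + B 1 * C 1 ^ 2 + C 0 ^ 2 * C 1 - 2 * C 0 ^ 2 * O 1 + C 0 ^ 2 * P 1 - 2 * C 0 * C 1 * P 0 + C 1 ^ 3 - 2 * C 1 ^ 2 * O 1 - C 1 ^ 2 * P 1) * hs3x + (-A 0 ^ 3 - A 0 ^ 2 * B 0 + A 0 ^ 2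 * C 0 + 2 * A 0 ^ 2 * O 0 + A 0 ^ 2 * P 0 - A 0 * A 1 ^ 2 + 2 * A 0 * A 1 * P 1 + 2 * A 0 * B 0 * C 0 + A 0 * C 0 ^ 2 - 4 * A 0 * C 0 * O 0 - 2 * A 0 * C 0 * P 0 + A 0 * C 1 ^ 2 - 2 * A 0 * C 1 * P 1 - A 1 ^ 2 * B 0 + A 1 ^ 2 * C 0 + 2 * A 1 ^ 2 * O 0 - A 1 ^ 2 * P 0 + 2 * A 1 * B 0 * C 1 - 2 * A 1 * C 0 * P 1 - 4 * A 1 * C 1 * O 0 + 2 * A 1 * C 1 * P 0 - B 0 * C 0 ^ 2 - B 0 * C 1 ^ 2 - C 0 ^ 3 + 2 * C 0 ^ 2 * O 0 + C 0 ^ 2 * P 0 - C 0 * C 1 ^ 2 + 2 * C 0 * C 1 * P 1 + 2 * C 1 ^ 2 * O 0 - C 1 ^ 2 * P 0) * hs3y + (-2 * A 0 ^ 3 * B 1 + 2 * A 0 ^ 3 * C 1 + 2 * A 0 ^ 2 * A 1 * B 0 - 2 * A 0 ^ 2 * A 1 * C 0 + 2 * A 0 ^ 2 * B 0 * B 1 -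 4 * A 0 ^ 2 * B 0 * C 1 + 4 * A 0 ^ 2 * B 1 * C 0 - 2 * A 0 ^ 2 * C 0 * C 1 - 2 * A 0 * A 1 ^ 2 * B 1 + 2 * A 0 * A 1 ^ 2 * C 1 - 2 * A 0 * A 1 * B 0 ^ 2 + 2 * A 0 * A 1 * B 1 ^ 2 + 2 * A 0 * A 1 * C 0 ^ 2 - 2 * A 0 * A 1 * C 1 ^ 2 + 2 * A 0 * B 0 ^ 2 * C 1 - 4 * A 0 * B 0 * B 1 * C 0 + 4 * A 0 * B 0 * C 0 * C 1 - 2 * A 0 * B 1 ^ 2 * C 1 - 2 * A 0 * B 1 * C 0 ^ 2 + 2 * A 0 * B 1 * C 1 ^ 2 + 2 * A 1 ^ 3 * B 0 - 2 * A 1 ^ 3 * C 0 - 2 * A 1 ^ 2 * B 0 * B 1 - 4 * A 1 ^ 2 * B 0 * C 1 + 4 * A 1 ^ 2 * B 1 * C 0 + 2 * A 1 ^ 2 * C 0 * C 1 + 2 * A 1 * B 0 ^ 2 * C 0 + 4 * A 1 * B 0 * B 1 * C 1 - 2 * A 1 * B 0 * C 0 ^ 2 + 2 * A 1 * B 0 *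 C 1 ^ 2 - 2 * A 1 * B 1 ^ 2 * C 0 - 4 * A 1 * B 1 * C 0 * C 1 - 2 * B 0 ^ 2 * C 0 * C 1 + 2 * B 0 * B 1 * C 0 ^ 2 - 2 * B 0 * B 1 * C 1 ^ 2 + 2 * B 1 ^ 2 * C 0 * C 1) * hg3 + (-4 * A 0 ^ 3 * B 1 + 4 * A 0 ^ 3 * C 1 + 4 * A 0 ^ 2 * A 1 * B 0 - 4 * A 0 ^ 2 * A 1 * C 0 + 2 * A 0 ^ 2 * B 0 * B 1 - 6 * A 0 ^ 2 * B 0 * C 1 + 6 * A 0 ^ 2 * B 1 * C 0 + 4 * A 0 ^ 2 * B 1 * P 0 - 2 * A 0 ^ 2 * C 0 * C 1 - 4 * A 0 ^ 2 * C 1 * P 0 - 4 * A 0 * A 1 ^ 2 * B 1 + 4 * A 0 * A 1 ^ 2 * C 1 - 2 * A 0 * A 1 * B 0 ^ 2 - 4 * A 0 * A 1 * B 0 * P 0 + 2 * A 0 * A 1 * B 1 ^ 2 + 4 * A 0 * A 1 * B 1 * P 1 + 2 * A 0 * A 1 * C 0 ^ 2 + 4 * A 0 * A 1 * C 0 * P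 0 - 2 * A 0 * A 1 * C 1 ^ 2 - 4 * A 0 * A 1 * C 1 * P 1 - 2 * A 0 * B 0 ^ 2 * B 1 + 4 * A 0 * B 0 ^ 2 * C 1 - 2 * A 0 * B 0 * B 1 * C 0 + 4 * A 0 * B 0 * B 1 * O 0 - 2 * A 0 * B 0 * B 1 * P 0 + 2 * A 0 * B 0 * C 0 * C 1 - 4 * A 0 * B 0 * C 1 * O 0 + 6 * A 0 * B 0 * C 1 * P 0 - 2 * A 0 * B 1 ^ 3 + 2 * A 0 * B 1 ^ 2 * C 1 + 4 * A 0 * B 1 ^ 2 * O 1 - 2 * A 0 * B 1 ^ 2 * P 1 - 4 * A 0 * B 1 * C 0 * O 0 - 6 * A 0 * B 1 * C 0 * P 0 + 2 * A 0 * B 1 * C 1 ^ 2 - 8 * A 0 * B 1 * C 1 * O 1 - 2 * A 0 * C 0 ^ 2 * C 1 + 4 * A 0 * C 0 * C 1 * O 0 + 2 * A 0 * C 0 * C 1 * P 0 - 2 * A 0 * C 1 ^ 3 + 4 * A 0 * C 1 ^ 2 * O 1 + 2 * A 0 * C 1 ^ 2 * P 1 + 4 * A 1 ^ 3 * B 0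 - 4 * A 1 ^ 3 * C 0 - 2 * A 1 ^ 2 * B 0 * B 1 - 6 * A 1 ^ 2 * B 0 * C 1 - 4 * A 1 ^ 2 * B 0 * P 1 + 6 * A 1 ^ 2 * B 1 * C 0 + 2 * A 1 ^ 2 * C 0 * C 1 + 4 * A 1 ^ 2 * C 0 * P 1 + 2 * A 1 * B 0 ^ 3 - 2 * A 1 * B 0 ^ 2 * C 0 - 4 * A 1 * B 0 ^ 2 * O 0 + 2 * A 1 * B 0 ^ 2 * P 0 + 2 * A 1 * B 0 * B 1 ^ 2 + 2 * A 1 * B 0 * B 1 * C 1 - 4 * A 1 * B 0 * B 1 * O 1 + 2 * A 1 * B 0 * B 1 * P 1 - 2 * A 1 * B 0 * C 0 ^ 2 + 8 * A 1 * B 0 * C 0 * O 0 + 4 * A 1 * B 0 * C 1 * O 1 + 6 * A 1 * B 0 * C 1 * P 1 - 4 * A 1 * B 1 ^ 2 * C 0 - 2 * A 1 * B 1 * C 0 * C 1 + 4 * A 1 * B 1 * C 0 * O 1 - 6 * A 1 * B 1 * C 0 * P 1 + 2 * A 1 * C 0 ^ 3 - 4 * A 1 * C 0 ^ 2 * O 0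 - 2 * A 1 * C 0 ^ 2 * P 0 + 2 * A 1 * C 0 * C 1 ^ 2 - 4 * A 1 * C 0 * C 1 * O 1 - 2 * A 1 * C 0 * C 1 * P 1 + 2 * B 0 ^ 3 * B 1 - 4 * B 0 ^ 3 * C 1 + 2 * B 0 ^ 2 * B 1 * C 0 - 8 * B 0 ^ 2 * B 1 * O 0 + 2 * B 0 ^ 2 * B 1 * P 0 + 12 * B 0 ^ 2 * C 1 * O 0 - 4 * B 0 ^ 2 * C 1 * P 0 + 2 * B 0 * B 1 ^ 3 - 4 * B 0 * B 1 ^ 2 * C 1 - 4 * B 0 * B 1 ^ 2 * O 1 - 2 * B 0 * B 1 * C 0 ^ 2 + 2 * B 0 * B 1 * C 0 * P 0 - 2 * B 0 * B 1 * C 1 ^ 2 + 12 * B 0 * B 1 * C 1 * O 1 - 2 * B 0 * B 1 * C 1 * P 1 + 8 * B 0 * B 1 * O 0 ^ 2 - 4 * B 0 * B 1 * O 0 * P 0 + 4 * B 0 * C 0 ^ 2 * C 1 - 8 * B 0 * C 0 * C 1 * O 0 - 2 * B 0 * C 0 * C 1 * P 0 + 4 * B 0 * C 1 ^ 3 - 8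 * B 0 * C 1 ^ 2 * O 1 - 2 * B 0 * C 1 ^ 2 * P 1 - 8 * B 0 * C 1 * O 0 ^ 2 + 4 * B 0 * C 1 * O 0 * P 0 + 2 * B 1 ^ 3 * C 0 - 4 * B 1 ^ 3 * O 0 + 2 * B 1 ^ 3 * P 0 - 4 * B 1 ^ 2 * C 0 * O 1 + 2 * B 1 ^ 2 * C 0 * P 1 + 4 * B 1 ^ 2 * C 1 * O 0 - 2 * B 1 ^ 2 * C 1 * P 0 + 8 * B 1 ^ 2 * O 0 * O 1 - 4 * B 1 ^ 2 * O 1 * P 0 - 2 * B 1 * C 0 ^ 3 + 8 * B 1 * C 0 ^ 2 * O 0 - 2 * B 1 * C 0 * C 1 ^ 2 + 4 * B 1 * C 0 * C 1 * O 1 + 2 * B 1 * C 0 * C 1 * P 1 - 8 * B 1 * C 0 * O 0 ^ 2 + 4 * B 1 * C 0 * O 0 * P 0 + 4 * B 1 * C 1 ^ 2 * O 0 - 2 * B 1 * C 1 ^ 2 * P 0 - 16 * B 1 * C 1 * O 0 * O 1 + 8 * B 1 * C 1 * O 1 * P 0 - 4 * C 0 ^ 2 * C 1 * O 0 + 2 *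 C 0 ^ 2 * C 1 * P 0 + 8 * C 0 * C 1 * O 0 ^ 2 - 4 * C 0 * C 1 * O 0 * P 0 - 4 * C 1 ^ 3 * O 0 + 2 * C 1 ^ 3 * P 0 + 8 * C 1 ^ 2 * O 0 * O 1 - 4 * C 1 ^ 2 * O 1 * P 0) * hg1 + (-2 * A 0 * A 1 * B 0 ^ 2 + 2 * A 0 * A 1 * B 0 * C 0 + 4 * A 0 * A 1 * B 0 * O 0 - 2 * A 0 * A 1 * B 0 * P 0 + 2 * A 0 * A 1 * B 1 ^ 2 - 2 * A 0 * A 1 * B 1 * C 1 - 4 * A 0 * A 1 * B 1 * O 1 + 2 * A 0 * A 1 * B 1 * P 1 - 4 * A 0 * A 1 * C 0 * O 0 + 2 * A 0 * A 1 * C 0 * P 0 + 4 * A 0 * A 1 * C 1 * O 1 - 2 * A 0 * A 1 * C 1 * P 1 - 2 * A 0 * B 0 ^ 2 * B 1 + 4 * A 0 * B 0 ^ 2 * C 1 - 2 * A 0 * B 0 * B 1 * C 0 + 8 * A 0 * B 0 * B 1 * O 0 - 2 * A 0 * B 0 * B 1 * P 0 - 12 * A 0 * B 0 * C 1 * O 0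 + 4 * A 0 * B 0 * C 1 * P 0 - 2 * A 0 * B 1 ^ 3 + 2 * A 0 * B 1 ^ 2 * C 1 + 4 * A 0 * B 1 ^ 2 * O 1 - 2 * A 0 * B 1 ^ 2 * P 1 + 4 * A 0 * B 1 * C 0 * O 0 - 2 * A 0 * B 1 * C 0 * P 0 - 4 * A 0 * B 1 * C 1 * O 1 + 2 * A 0 * B 1 * C 1 * P 1 - 8 * A 0 * B 1 * O 0 ^ 2 + 4 * A 0 * B 1 * O 0 * P 0 + 8 * A 0 * C 1 * O 0 ^ 2 - 4 * A 0 * C 1 * O 0 * P 0 - 4 * A 1 ^ 2 * B 0 * B 1 + 2 * A 1 ^ 2 * B 0 * C 1 + 4 * A 1 ^ 2 * B 0 * O 1 - 2 * A 1 ^ 2 * B 0 * P 1 + 2 * A 1 ^ 2 * B 1 * C 0 + 4 * A 1 ^ 2 * B 1 * O 0 - 2 * A 1 ^ 2 * B 1 * P 0 - 4 * A 1 ^ 2 * C 0 * O 1 + 2 * A 1 ^ 2 * C 0 * P 1 - 4 * A 1 ^ 2 * C 1 * O 0 + 2 * A 1 ^ 2 * C 1 * P 0 + 2 * A 1 * B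 0 ^ 3 - 2 * A 1 * B 0 ^ 2 * C 0 - 4 * A 1 * B 0 ^ 2 * O 0 + 2 * A 1 * B 0 ^ 2 * P 0 + 2 * A 1 * B 0 * B 1 ^ 2 + 2 * A 1 * B 0 * B 1 * C 1 + 2 * A 1 * B 0 * B 1 * P 1 + 4 * A 1 * B 0 * C 0 * O 0 - 2 * A 1 * B 0 * C 0 * P 0 - 8 * A 1 * B 0 * C 1 * O 1 + 2 * A 1 * B 0 * C 1 * P 1 - 4 * A 1 * B 1 ^ 2 * C 0 + 8 * A 1 * B 1 * C 0 * O 1 - 4 * A 1 * B 1 * C 0 * P 1 - 8 * A 1 * B 1 * O 0 * O 1 + 4 * A 1 * B 1 * O 1 * P 0 + 8 * A 1 * C 1 * O 0 * O 1 - 4 * A 1 * C 1 * O 1 * P 0 + 2 * B 0 ^ 3 * B 1 - 4 * B 0 ^ 3 * C 1 + 2 * B 0 ^ 2 * B 1 * C 0 - 8 * B 0 ^ 2 * B 1 * O 0 + 2 * B 0 ^ 2 * B 1 * P 0 + 12 * B 0 ^ 2 * C 1 * O 0 - 4 * B 0 ^ 2 * C 1 * P 0 + 2 * B 0 * B 1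 ^ 3 - 4 * B 0 * B 1 ^ 2 * C 1 - 4 * B 0 * B 1 ^ 2 * O 1 - 4 * B 0 * B 1 * C 0 * O 0 + 2 * B 0 * B 1 * C 0 * P 0 + 8 * B 0 * B 1 * C 1 * O 1 - 2 * B 0 * B 1 * C 1 * P 1 + 8 * B 0 * B 1 * O 0 ^ 2 - 4 * B 0 * B 1 * O 0 * P 0 - 8 * B 0 * C 1 * O 0 ^ 2 + 4 * B 0 * C 1 * O 0 * P 0 + 2 * B 1 ^ 3 * C 0 - 4 * B 1 ^ 3 * O 0 + 2 * B 1 ^ 3 * P 0 - 4 * B 1 ^ 2 * C 0 * O 1 + 2 * B 1 ^ 2 * C 0 * P 1 + 4 * B 1 ^ 2 * C 1 * O 0 - 2 * B 1 ^ 2 * C 1 * P 0 + 8 * B 1 ^ 2 * O 0 * O 1 - 4 * B 1 ^ 2 * O 1 * P 0 - 8 * B 1 * C 1 * O 0 * O 1 + 4 * B 1 * C 1 * O 1 * P 0) * hg2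
  have c12 : (P₁ 0 - H 0) * (P₂ 1 - H 1) - (P₁ 1 - H 1) * (P₂ 0 - H 0) = 0 :=
    (mul_eq_zero.mp k12).resolve_left (mul_ne_zero hD1 hD2)
  have c13 : (P₁ 0 - H 0) * (P₃ 1 - H 1) - (P₁ 1 - H 1) * (P₃ 0 - H 0) = 0 :=
    (mul_eq_zero.mp k13).resolve_left (mul_ne_zero hD1 hD3)
  have c23 : (P₂ 0 - H 0) * (P₃ 1 - H 1) - (P₂ 1 - H 1) * (P₃ 0 - H 0) = 0 :=
    (mul_eq_zero.mp k23).resolve_left (mul_ne_zero hD2 hD3)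
  have hcoll := coll4_s10 H P₁ P₂ P₃ c12 c13 c23
  exact hcoll.subset (by
    intro x hx
    simp only [Set.mem_insert_iff, Set.mem_singleton_iff] at hx ⊢
    tauto)
end

section
/- Lighthouse theorem for n = 2: given two points E and F, if two pairs of perpendicular lines, one pair through E and one pair through F, intersect in four points, then these four points form an orthocentric system; in particular the angle-bisectors at E and F of the triangle DEF (D the fourth intersection) concur four-at-a-time at the incentre and three excentres. -/
open RealInnerProductSpace

/-- Lighthouse theorem for `n = 2`: given two points `E` and `F`, a pair of
perpendicular lines through `E` (directions `u₁ ⊥ u₂`) and a pair of perpendicular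
lines through `F` (directions `v₁ ⊥ v₂`) intersect in four points `P₁₁, P₁₂, P₂₁, P₂₂`
(`Pᵢⱼ` on the `i`-th line through `E` and the `j`-th line through `F`); these four
points form an orthocentric system: the joins of the three complementary pairs are
mutually perpendicular, so each point is the orthocentre of the triangle formed by
the other three (whence the angle-bisectors at `E` and `F` of the triangle `DEF`
concur four-at-a-time at the incentre and the three excentres). -/
theorem stmt_13 (E F u₁ u₂ v₁ v₂ P₁₁ P₁₂ P₂₁ P₂₂ : EuclideanSpace ℝ (Fin 2))
    (hu₁ : u₁ ≠ 0) (hu₂ : u₂ ≠ 0) (hu : ⟪u₁, u₂⟫ = 0)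
    (hv₁ : v₁ ≠ 0) (hv₂ : v₂ ≠ 0) (hv : ⟪v₁, v₂⟫ = 0)
    (h11 : (∃ s : ℝ, P₁₁ = E + s • u₁) ∧ ∃ t : ℝ, P₁₁ = F + t • v₁)
    (h12 : (∃ s : ℝ, P₁₂ = E + s • u₁) ∧ ∃ t : ℝ, P₁₂ = F + t • v₂)
    (h21 : (∃ s : ℝ, P₂₁ = E + s • u₂) ∧ ∃ t : ℝ, P₂₁ = F + t • v₁)
    (h22 : (∃ s : ℝ, P₂₂ = E + s • u₂) ∧ ∃ t : ℝ, P₂₂ = F + t • v₂) :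
    ⟪P₁₁ - P₁₂, P₂₁ - P₂₂⟫ = 0 ∧ ⟪P₁₁ - P₂₁, P₁₂ - P₂₂⟫ = 0 ∧
    ⟪P₁₁ - P₂₂, P₁₂ - P₂₁⟫ = 0 := by
  obtain ⟨⟨s₁₁, hs₁₁⟩, ⟨t₁₁, ht₁₁⟩⟩ := h11
  obtain ⟨⟨s₁₂, hs₁₂⟩, ⟨t₁₂, ht₁₂⟩⟩ := h12
  obtain ⟨⟨s₂₁, hs₂₁⟩, ⟨t₂₁, ht₂₁⟩⟩ := h21
  obtain ⟨⟨s₂₂, hs₂₂⟩, ⟨t₂₂, ht₂₂⟩⟩ := h22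
  -- First perpendicularity: both differences are along u₁ and u₂.
  have g1 : ⟪P₁₁ - P₁₂, P₂₁ - P₂₂⟫ = 0 := by
    have e1 : P₁₁ - P₁₂ = (s₁₁ - s₁₂) • u₁ := by
      rw [hs₁₁, hs₁₂, sub_smul]; abel
    have e2 : P₂₁ - P₂₂ = (s₂₁ - s₂₂) • u₂ := by
      rw [hs₂₁, hs₂₂, sub_smul]; abel
    rw [e1, e2, real_inner_smul_left, real_inner_smul_right, hu]
    ring
  -- Second perpendicularity: both differences are along v₁ and v₂.
  have g2 : ⟪P₁₁ - P₂₁, P₁₂ - P₂₂⟫ = 0 := by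
    have e1 : P₁₁ - P₂₁ = (t₁₁ - t₂₁) • v₁ := by
      rw [ht₁₁, ht₂₁, sub_smul]; abel
    have e2 : P₁₂ - P₂₂ = (t₁₂ - t₂₂) • v₂ := by
      rw [ht₁₂, ht₂₂, sub_smul]; abel
    rw [e1, e2, real_inner_smul_left, real_inner_smul_right, hv]
    ring
  -- Third perpendicularity follows from the first two by the orthocentric
  -- identity ⟪A - D, B - C⟫ = ⟪A - C, B - D⟫ - ⟪A - B, C - D⟫.
  refine ⟨g1, g2, ?_⟩
  have key : ∀ A B C D : EuclideanSpace ℝ (Fin 2),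
      ⟪A - D, B - C⟫ = ⟪A - C, B - D⟫ - ⟪A - B, C - D⟫ := by
    intro A B C D
    simp only [inner_sub_left, inner_sub_right]
    rw [real_inner_comm D B, real_inner_comm D C, real_inner_comm C B,
      real_inner_comm D A, real_inner_comm C A, real_inner_comm B A]
    ring
  rw [key P₁₁ P₁₂ P₂₁ P₂₂, g1, g2]
  ring
end
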